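/- arXiv:0806.3677 — 4 statements merged into one kernel-verified Lean document; each statement's English description precedes it below -/
import Mathlib

section
/- Let μ be a nonzero finite measure on ℕ with generating function g(x) = Σ_{a≥0} x^a μ(a). For every p, q > 0 and all sufficiently small x, y > 0, the unique analytic solution h(x,y) of the equation h(x,y) = y·g(p·x + q·h(x,y)) is given by h(x,y) = Σ_{a≥0} Σ_{m≥1} x^a y^m (1/m)·C(m+a-1, a)·q^{m-1}·p^a·μ^{*m}(m+a-1), where μ^{*m} is the m-th convolution power of μ and C(·,·) is a binomial coefficient. -/
open Finset PowerSeries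
open scoped ENNReal NNReal

/-- Convolution of two sequences. -/
def conv (f g : ℕ → ℝ) (n : ℕ) : ℝ := ∑ k ∈ Finset.range (n + 1), f k * g (n - k)

/-- `convPow f m` is the `m`-fold convolution power of `f` (with `convPow f 0 = δ_0`). -/
def convPow (f : ℕ → ℝ) : ℕ → ℕ → ℝ
  | 0, n => if n = 0 then 1 else 0
  | m + 1, n => conv f (convPow f m) n

section Generic
variable {R : Type*} [CommRing R]

def convR (f g : ℕ → R) (n : ℕ) : R := ∑ k ∈ Finset.range (n + 1), f k * g (n - k)

def convPowR (f : ℕ → R) : ℕ → ℕ → R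
  | 0, n => if n = 0 then 1 else 0
  | m + 1, n => convR f (convPowR f m) n

lemma conv_eq_convR (f g : ℕ → ℝ) : conv f g = convR f g := rfl

lemma convPow_eq_convPowR (f : ℕ → ℝ) (m : ℕ) : convPow f m = convPowR f m := by
  induction m with
  | zero => rfl
  | succ m ih => funext n; show conv f (convPow f m) n = convR f (convPowR f m) n; rw [ih]; rfl

lemma convR_eq_coeff (f g : ℕ → R) (n : ℕ) :
    convR f g n = coeff n (PowerSeries.mk f * PowerSeries.mk g) := by
  rw [PowerSeries.coeff_mul, Finset.Nat.sum_antidiagonal_eq_sum_range_succ_mk]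
  simp [convR]

lemma mk_convR (f g : ℕ → R) :
    PowerSeries.mk (convR f g) = PowerSeries.mk f * PowerSeries.mk g := by
  ext n; rw [coeff_mk, convR_eq_coeff]

lemma mk_convPowR (f : ℕ → R) (m : ℕ) :
    PowerSeries.mk (convPowR f m) = (PowerSeries.mk f) ^ m := by
  induction m with
  | zero =>
    ext n
    simp only [pow_zero, coeff_mk, PowerSeries.coeff_one]
    rfl
  | succ m ih =>
    have : convPowR f (m+1) = convR f (convPowR f m) := rfl
    rw [this, mk_convR, ih, pow_succ]
    ring

lemma convR_comm (f g : ℕ → R) : convR f g = convR g f := by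
  funext n; rw [convR_eq_coeff, convR_eq_coeff, mul_comm]

lemma convR_assoc (f g h : ℕ → R) : convR (convR f g) h = convR f (convR g h) := by
  funext n
  rw [convR_eq_coeff, convR_eq_coeff, mk_convR, mk_convR, mul_assoc]

/-- `dd f n = n * f n`; corresponds to `X * derivative`. -/
def dd (f : ℕ → R) : ℕ → R := fun n => (n : R) * f n

lemma dd_convR (f g : ℕ → R) : dd (convR f g) = fun n => convR (dd f) g n + convR f (dd g) n := by
  funext n
  simp only [dd, convR, Finset.mul_sum, ← Finset.sum_add_distrib]
  refine Finset.sum_congr rfl fun k hk => ?_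
  have hk' : k ≤ n := Nat.lt_succ_iff.mp (Finset.mem_range.mp hk)
  have : ((n - k : ℕ) : R) = (n : R) - (k : R) := by
    rw [Nat.cast_sub hk']
  ring_nf
  rw [this]
  ring

lemma dd_convPowR (f : ℕ → R) (m : ℕ) :
    dd (convPowR f (m + 1)) = fun n => ((m : R) + 1) * convR (dd f) (convPowR f m) n := by
  induction m with
  | zero =>
    funext n
    have h1 : convPowR f 1 = convR f (convPowR f 0) := rfl
    rw [h1, dd_convR]
    have : convR f (dd (convPowR f 0)) n = 0 := by
      apply Finset.sum_eq_zero
      intro k hk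
      rcases Nat.eq_zero_or_pos (n - k) with h | h
      · simp [dd, convPowR, h]
      · simp [dd, convPowR, Nat.pos_iff_ne_zero.mp h]
    simp [this]
  | succ m ih =>
    funext n
    have h1 : convPowR f (m + 2) = convR f (convPowR f (m+1)) := rfl
    rw [h1, dd_convR]
    simp only [ih]
    have h2 : convR f (fun n => ((m:R)+1) * convR (dd f) (convPowR f m) n) n
        = ((m:R)+1) * convR f (convR (dd f) (convPowR f m)) n := by
      simp only [convR, Finset.mul_sum]
      refine Finset.sum_congr rfl fun k _ => Finset.sum_congr rfl fun j _ => by ring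
    rw [h2]
    have h3 : convR f (convR (dd f) (convPowR f m)) = convR (dd f) (convPowR f (m+1)) := by
      rw [convR_comm f, convR_assoc, convR_comm (convPowR f m) f]
      rfl
    rw [h3]
    push_cast
    ring

/-- Coefficient-level derivative identity `E`. -/
lemma lemE (f : ℕ → R) (m n : ℕ) :
    (n : R) * convPowR f (m + 1) n
      = ((m : R) + 1) * ∑ j ∈ Finset.range (n + 1), (j : R) * f j * convPowR f m (n - j) := by
  have := congrFun (dd_convPowR f m) n
  simp only [dd, convR] at this
  rw [this]
/-- first passage weights: `fp φ n k` = weight of paths making first passage to `-k` at time `n`. -/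
def fp (φ : ℕ → R) : ℕ → ℕ → R
  | 0, k => if k = 0 then 1 else 0
  | n + 1, k => if k = 0 then 0 else ∑ i ∈ Finset.range (n + 2), φ i * fp φ n (k + i - 1)

variable (φ : ℕ → R)

lemma fp_zero_right (n : ℕ) : fp φ n 0 = if n = 0 then 1 else 0 := by
  cases n with
  | zero => rfl
  | succ n => rfl

lemma fp_succ (n k : ℕ) :
    fp φ (n+1) (k+1) = ∑ i ∈ Finset.range (n + 2), φ i * fp φ n (k + i) := by
  show (if k+1 = 0 then _ else _) = _
  rw [if_neg (Nat.succ_ne_zero k)]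
  refine Finset.sum_congr rfl fun i _ => ?_
  have : k + 1 + i - 1 = k + i := by omega
  rw [this]

lemma fp_eq_zero_of_lt : ∀ n k, n < k → fp φ n k = 0 := by
  intro n
  induction n with
  | zero => intro k hk; show (if k = 0 then _ else _) = 0; rw [if_neg (Nat.pos_iff_ne_zero.mp hk)]
  | succ n ih =>
    intro k hk
    obtain ⟨k, rfl⟩ : ∃ k', k = k' + 1 := ⟨k - 1, by omega⟩
    rw [fp_succ]
    apply Finset.sum_eq_zero
    intro i _
    rw [ih (k + i) (by omega), mul_zero]

/-- recursion with any large enough range -/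
lemma fp_succ_ext (n k N : ℕ) (hN : n + 2 ≤ N) :
    fp φ (n+1) (k+1) = ∑ i ∈ Finset.range N, φ i * fp φ n (k + i) := by
  rw [fp_succ]
  apply Finset.sum_subset (Finset.range_subset_range.mpr hN)
  intro i _ hi
  rw [fp_eq_zero_of_lt φ n (k+i) (by simp at hi; omega), mul_zero]

/-- semigroup property: decomposition of first passages -/
lemma fp_conv : ∀ n k l, fp φ n (k + l) = ∑ j ∈ Finset.range (n+1), fp φ j k * fp φ (n - j) l := by
  intro n
  induction n using Nat.strong_induction_on with
  | _ n IH =>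
    intro k l
    cases k with
    | zero =>
      rw [show (0:ℕ) + l = l from zero_add l, Finset.sum_eq_single 0]
      · simp [fp_zero_right]
      · intro j hj hj0
        rw [fp_zero_right, if_neg hj0, zero_mul]
      · intro h; simp at h
    | succ k =>
      cases n with
      | zero =>
        rw [show (0:ℕ)+1 = 1 from rfl, Finset.sum_range_one]
        rw [fp_eq_zero_of_lt φ 0 (k+1+l) (by omega), fp_eq_zero_of_lt φ 0 (k+1) (by omega), zero_mul]
      | succ n =>
        have hstep : (k + 1) + l = (k + l) + 1 := by omega
        rw [hstep, fp_succ]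
        -- RHS: split off j = 0 term (zero) and rewrite fp φ j (k+1) via recursion
        conv_rhs => rw [Finset.sum_range_succ']
        have h0 : fp φ 0 (k+1) * fp φ (n + 1 - 0) l = 0 := by
          rw [fp_eq_zero_of_lt φ 0 (k+1) (by omega), zero_mul]
        rw [h0, add_zero]
        have hrw : ∀ j ∈ Finset.range (n+1),
            fp φ (j+1) (k+1) * fp φ (n + 1 - (j+1)) l
              = ∑ i ∈ Finset.range (n+2), φ i * (fp φ j (k + i) * fp φ (n - j) l) := by
          intro j hj
          have hj' : j + 2 ≤ n + 2 := by simp at hj; omega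
          rw [fp_succ_ext φ j k (n+2) hj', Finset.sum_mul]
          refine Finset.sum_congr rfl fun i _ => ?_
          have : n + 1 - (j + 1) = n - j := by omega
          rw [this, mul_assoc]
        rw [Finset.sum_congr rfl hrw, Finset.sum_comm]
        refine Finset.sum_congr rfl fun i _ => ?_
        rw [← Finset.mul_sum]
        congr 1
        -- goal: fp φ n (k + i + l) = ∑_{j ∈ range (n+1)} fp φ j (k+i) * fp φ (n-j) l
        have h2 : k + l + i = k + i + l := by omega
        rw [h2]
        exact IH n (by omega) (k+i) l

/-- The hitting time theorem. -/
theorem hitting [IsDomain R] [CharZero R] : ∀ (n k : ℕ), k ≤ n →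
    (n : R) * fp φ n k = (k : R) * convPowR φ n (n - k) := by
  intro n
  induction n with
  | zero =>
    intro k hk
    interval_cases k
    simp
  | succ n IH =>
    intro k hk
    cases k with
    | zero =>
      rw [show fp φ (n+1) 0 = 0 from rfl]
      simp
    | succ k' =>
      have hk' : k' ≤ n := by omega
      set r := n - k' with hrdef
      have hνexp : convPowR φ (n+1) r = ∑ i ∈ Finset.range (r+1), φ i * convPowR φ n (r-i) := rfl
      -- the two sum abbreviations
      set A := ∑ i ∈ Finset.range (r+1), φ i * convPowR φ n (r-i) with hA
      set B := ∑ i ∈ Finset.range (r+1), (i:R) * φ i * convPowR φ n (r-i) with hB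
      have key : ((n:R) - (k':R)) * A = ((n:R)+1) * B := by
        have := lemE φ n r
        rw [hνexp] at this
        have hcast : ((r:ℕ):R) = (n:R) - (k':R) := by
          rw [hrdef, Nat.cast_sub hk']
        rw [← hcast, this]
      cases Nat.eq_zero_or_pos n with
      | inl h0 =>
        subst h0
        have hk0 : k' = 0 := by omega
        subst hk0
        have h1 : fp φ 1 1 = φ 0 := by
          rw [fp_succ]
          rw [show (0:ℕ)+2 = 2 from rfl, Finset.sum_range_succ, Finset.sum_range_one]
          have e1 : fp φ 0 0 = 1 := rfl
          have e2 : fp φ 0 1 = (0:R) := rfl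
          rw [show (0:ℕ)+0 = 0 from rfl, show (0:ℕ)+1 = 1 from rfl, e1, e2]
          ring
        have h2 : convPowR φ 1 0 = φ 0 := by
          show convR φ (convPowR φ 0) 0 = φ 0
          rw [convR, Finset.sum_range_one]
          show φ 0 * (if (0:ℕ) = 0 then (1:R) else 0) = φ 0
          simp
        rw [h1, show (1:ℕ) - 1 = 0 from rfl, h2]
      | inr hn =>
        have hncast : (n:R) ≠ 0 := Nat.cast_ne_zero.mpr (Nat.pos_iff_ne_zero.mp hn)
        apply mul_left_cancel₀ hncast
        -- expand LHS
        have expand : fp φ (n+1) (k'+1) = ∑ i ∈ Finset.range (n+2), φ i * fp φ n (k'+i) :=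
          fp_succ φ n k'
        have hsum : ∑ i ∈ Finset.range (n+2), φ i * ((n:R) * fp φ n (k'+i))
            = ∑ i ∈ Finset.range (r+1), φ i * (((k':R)+(i:R)) * convPowR φ n (r-i)) := by
          rw [← Finset.sum_subset (Finset.range_subset_range.mpr (by omega : r+1 ≤ n+2))]
          · refine Finset.sum_congr rfl fun i hi => ?_
            have hi' : i ≤ r := by simpa [Nat.lt_succ_iff] using hi
            have hle : k' + i ≤ n := by omega
            rw [IH (k'+i) hle]
            have : n - (k'+i) = r - i := by omega
            rw [this]
            push_cast
            ring
          · intro i hi hni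
            have : n < k' + i := by
              simp only [Finset.mem_range, Nat.lt_succ_iff] at hi hni
              omega
            rw [fp_eq_zero_of_lt φ n (k'+i) this]
            ring
        have lhs_eq : (n:R) * (((n:ℕ)+1 : R) * fp φ (n+1) (k'+1))
            = ((n:R)+1) * ((k':R) * A + B) := by
          rw [expand, Finset.mul_sum, Finset.mul_sum]
          have step1 : ∀ i ∈ Finset.range (n+2),
              (n:R) * (((n:ℕ)+1:R) * (φ i * fp φ n (k'+i)))
                = ((n:R)+1) * (φ i * ((n:R) * fp φ n (k'+i))) := by
            intro i _; ring
          rw [Finset.sum_congr rfl step1, ← Finset.mul_sum, hsum]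
          congr 1
          have step2 : ∀ i ∈ Finset.range (r+1),
              φ i * (((k':R)+(i:R)) * convPowR φ n (r-i))
                = (k':R) * (φ i * convPowR φ n (r-i)) + (i:R) * φ i * convPowR φ n (r-i) := by
            intro i _; ring
          rw [Finset.sum_congr rfl step2, Finset.sum_add_distrib, ← Finset.mul_sum]
        have goal_cast : ((n+1:ℕ):R) = (n:R)+1 := by push_cast; ring
        have kcast : ((k'+1:ℕ):R) = (k':R)+1 := by push_cast; ring
        rw [show n + 1 - (k'+1) = r from by omega, hνexp, goal_cast, kcast, lhs_eq]
        -- now pure algebra with key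
        linear_combination -key

end Generic

noncomputable def W (μ : ℕ → ℝ) (p q : ℝ) (i : ℕ) : PowerSeries ℝ :=
  PowerSeries.mk fun a => (Nat.choose (i+a) i : ℝ) * p^a * q^i * μ (i+a)

lemma coeff_convPowR_W (μ : ℕ → ℝ) (p q : ℝ) : ∀ (n r a : ℕ),
    PowerSeries.coeff a (convPowR (W μ p q) n r)
      = (Nat.choose (r+a) r : ℝ) * p^a * q^r * convPow μ n (r+a) := by
  intro n
  induction n with
  | zero =>
    intro r a
    show coeff a (if r = 0 then 1 else 0) = _
    have hc : convPow μ 0 (r + a) = if r + a = 0 then (1:ℝ) else 0 := rfl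
    rcases eq_or_ne r 0 with hr | hr
    · subst hr
      rw [if_pos rfl, hc]
      rcases eq_or_ne a 0 with ha | ha
      · subst ha; simp
      · rw [PowerSeries.coeff_one, if_neg ha, if_neg (by omega : ¬ ((0:ℕ) + a = 0))]
        ring
    · rw [if_neg hr, hc, if_neg (by omega : ¬ (r + a = 0)), map_zero]
      ring
  | succ n IH =>
    intro r a
    show coeff a (∑ k ∈ Finset.range (r+1), W μ p q k * convPowR (W μ p q) n (r-k)) = _
    rw [map_sum]
    have expand : ∀ k ∈ Finset.range (r+1),
        coeff a (W μ p q k * convPowR (W μ p q) n (r-k))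
          = ∑ t ∈ Finset.range (r+a+1),
              ((Nat.choose t k : ℝ) * (Nat.choose (r+a-t) (r-k) : ℝ)
                * μ t * convPow μ n (r+a-t)) * (p^a * q^r) := by
      intro k hk
      have hkr : k ≤ r := by simpa [Nat.lt_succ_iff] using hk
      rw [PowerSeries.coeff_mul, Finset.Nat.sum_antidiagonal_eq_sum_range_succ_mk]
      have term_eq : ∀ a1 ∈ Finset.range (a+1),
          coeff a1 (W μ p q k) * coeff (a - a1) (convPowR (W μ p q) n (r-k))
            = ((Nat.choose (k+a1) k : ℝ) * (Nat.choose (r+a-(k+a1)) (r-k) : ℝ)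
                * μ (k+a1) * convPow μ n (r+a-(k+a1))) * (p^a * q^r) := by
        intro a1 ha1
        have ha1' : a1 ≤ a := by simpa [Nat.lt_succ_iff] using ha1
        rw [show coeff a1 (W μ p q k) = (Nat.choose (k+a1) k : ℝ) * p^a1 * q^k * μ (k+a1)
          from coeff_mk _ _, IH (r-k) (a-a1)]
        have e1 : r - k + (a - a1) = r + a - (k + a1) := by omega
        have e2 : p ^ a1 * p ^ (a-a1) = p ^ a := by rw [← pow_add]; congr 1; omega
        have e3 : q ^ k * q ^ (r-k) = q ^ r := by rw [← pow_add]; congr 1; omega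
        rw [e1, ← e2, ← e3]
        ring
      rw [Finset.sum_congr rfl term_eq]
      -- reindex a1 ↦ t = k + a1 and extend the range
      rw [show ∑ a1 ∈ Finset.range (a+1),
            ((Nat.choose (k+a1) k : ℝ) * (Nat.choose (r+a-(k+a1)) (r-k) : ℝ)
              * μ (k+a1) * convPow μ n (r+a-(k+a1))) * (p^a * q^r)
          = ∑ t ∈ Finset.Ico k (k+a+1),
            ((Nat.choose t k : ℝ) * (Nat.choose (r+a-t) (r-k) : ℝ)
              * μ t * convPow μ n (r+a-t)) * (p^a * q^r) from by
        rw [Finset.sum_Ico_eq_sum_range]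
        apply Finset.sum_congr (by congr 1; omega)
        intro a1 _
        congr 2]
      apply Finset.sum_subset
      · intro t ht
        simp only [Finset.mem_Ico] at ht
        simp only [Finset.mem_range]
        omega
      · intro t ht hnt
        simp only [Finset.mem_range] at ht
        simp only [Finset.mem_Ico, not_and, not_lt] at hnt
        rcases lt_or_ge t k with h | h
        · rw [Nat.choose_eq_zero_of_lt h]; ring
        · have h2 : k + a + 1 ≤ t := hnt h
          have : r + a - t < r - k := by omega
          rw [Nat.choose_eq_zero_of_lt this]; ring
    rw [Finset.sum_congr rfl expand, Finset.sum_comm]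
    have vander : ∀ t ∈ Finset.range (r+a+1),
        ∑ k ∈ Finset.range (r+1),
          ((Nat.choose t k : ℝ) * (Nat.choose (r+a-t) (r-k) : ℝ)
            * μ t * convPow μ n (r+a-t)) * (p^a * q^r)
        = ((Nat.choose (r+a) r : ℝ) * p^a * q^r) * (μ t * convPow μ n (r+a-t)) := by
      intro t ht
      have ht' : t ≤ r + a := by simpa [Nat.lt_succ_iff] using ht
      have hv : (Nat.choose (r+a) r : ℝ)
          = ∑ k ∈ Finset.range (r+1), (Nat.choose t k : ℝ) * (Nat.choose (r+a-t) (r-k) : ℝ) := by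
        have := Nat.add_choose_eq t (r+a-t) r
        rw [show t + (r+a-t) = r+a from by omega] at this
        rw [this, Finset.Nat.sum_antidiagonal_eq_sum_range_succ_mk]
        push_cast
        rfl
      rw [show ∑ k ∈ Finset.range (r+1),
            ((Nat.choose t k : ℝ) * (Nat.choose (r+a-t) (r-k) : ℝ)
              * μ t * convPow μ n (r+a-t)) * (p^a * q^r)
          = (∑ k ∈ Finset.range (r+1), (Nat.choose t k : ℝ) * (Nat.choose (r+a-t) (r-k) : ℝ))
              * (μ t * convPow μ n (r+a-t) * (p^a * q^r)) from by
        rw [Finset.sum_mul]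
        exact Finset.sum_congr rfl fun k _ => by ring]
      rw [← hv]
      ring
    rw [Finset.sum_congr rfl vander, ← Finset.mul_sum]
    rfl

noncomputable section

/-- ENNReal Cauchy product. -/
lemma enn_cauchy (f g : ℕ → ℝ≥0∞) :
    (∑' n, f n) * (∑' n, g n) = ∑' n, ∑ k ∈ Finset.range (n+1), f k * g (n-k) := by
  have h1 : (∑' n, f n) * (∑' n, g n) = ∑' (p : ℕ × ℕ), f p.1 * g p.2 := by
    rw [ENNReal.tsum_prod', ← ENNReal.tsum_mul_right]
    congr 1
    funext a
    rw [← ENNReal.tsum_mul_left]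
  rw [h1, ← Finset.HasAntidiagonal.sigmaAntidiagonalEquivProd.tsum_eq (fun p : ℕ × ℕ => f p.1 * g p.2)]
  rw [ENNReal.tsum_sigma']
  congr 1
  funext n
  rw [tsum_fintype]
  rw [show ∑ b : {x // x ∈ Finset.HasAntidiagonal.antidiagonal n},
        (fun p : ℕ × ℕ => f p.1 * g p.2) (Finset.HasAntidiagonal.sigmaAntidiagonalEquivProd ⟨n, b⟩)
      = ∑ b ∈ Finset.HasAntidiagonal.antidiagonal n, f b.1 * g b.2 from
    Finset.sum_finset_coe (fun p : ℕ × ℕ => f p.1 * g p.2) (Finset.HasAntidiagonal.antidiagonal n)]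
  rw [Finset.Nat.sum_antidiagonal_eq_sum_range_succ_mk]

/-- evaluation of a nonneg power series at `x : ℝ≥0∞`. -/
def ev (x : ℝ≥0∞) (F : PowerSeries ℝ) : ℝ≥0∞ :=
  ∑' a, ENNReal.ofReal (PowerSeries.coeff a F) * x ^ a

def PosCoeff (F : PowerSeries ℝ) : Prop := ∀ a, 0 ≤ PowerSeries.coeff a F

lemma PosCoeff.mul {F G : PowerSeries ℝ} (hF : PosCoeff F) (hG : PosCoeff G) :
    PosCoeff (F * G) := by
  intro a
  rw [PowerSeries.coeff_mul]
  exact Finset.sum_nonneg fun ij _ => mul_nonneg (hF _) (hG _)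

lemma PosCoeff.sum {s : Finset ℕ} {F : ℕ → PowerSeries ℝ} (h : ∀ i ∈ s, PosCoeff (F i)) :
    PosCoeff (∑ i ∈ s, F i) := by
  intro a
  rw [map_sum]
  exact Finset.sum_nonneg fun i hi => h i hi a

lemma ev_zero_of (x : ℝ≥0∞) : ev x 0 = 0 := by
  simp [ev]

lemma ev_one (x : ℝ≥0∞) : ev x 1 = 1 := by
  rw [ev, tsum_eq_sum (s := {0})]
  · simp
  · intro a ha
    simp only [Finset.mem_singleton] at ha
    rw [PowerSeries.coeff_one, if_neg ha]
    simp

lemma ev_sum (x : ℝ≥0∞) (s : Finset ℕ) (F : ℕ → PowerSeries ℝ)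
    (h : ∀ i ∈ s, PosCoeff (F i)) :
    ev x (∑ i ∈ s, F i) = ∑ i ∈ s, ev x (F i) := by
  calc ev x (∑ i ∈ s, F i)
      = ∑' a, ∑ i ∈ s, ENNReal.ofReal (PowerSeries.coeff a (F i)) * x ^ a := by
        rw [ev]
        congr 1
        funext a
        rw [map_sum, ENNReal.ofReal_sum_of_nonneg (fun i hi => h i hi a), Finset.sum_mul]
    _ = ∑ i ∈ s, ev x (F i) := Summable.tsum_finsetSum (fun i _ => ENNReal.summable)

lemma ev_mul (x : ℝ≥0∞) {F G : PowerSeries ℝ} (hF : PosCoeff F) (hG : PosCoeff G) :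
    ev x (F * G) = ev x F * ev x G := by
  rw [ev, ev, ev, enn_cauchy]
  congr 1
  funext n
  rw [PowerSeries.coeff_mul, Finset.Nat.sum_antidiagonal_eq_sum_range_succ_mk,
    ENNReal.ofReal_sum_of_nonneg (fun i _ => mul_nonneg (hF _) (hG _)), Finset.sum_mul]
  refine Finset.sum_congr rfl fun k hk => ?_
  have hk' : k ≤ n := by simpa [Nat.lt_succ_iff] using hk
  rw [ENNReal.ofReal_mul (hF _)]
  have : x ^ n = x ^ k * x ^ (n - k) := by rw [← pow_add]; congr 1; omega
  rw [this]
  ring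
end
-- ===================== additional helpers =====================

instance : CharZero (PowerSeries ℝ) :=
  ⟨fun a b h => Nat.cast_injective (R := ℝ)
    (by simpa using congrArg (PowerSeries.constantCoeff) h)⟩

lemma convPow_nonneg {μ : ℕ → ℝ} (hnn : ∀ a, 0 ≤ μ a) : ∀ m t, 0 ≤ convPow μ m t := by
  intro m
  induction m with
  | zero => intro t; show (0:ℝ) ≤ if t = 0 then 1 else 0; split <;> norm_num
  | succ m ih =>
    intro t
    show (0:ℝ) ≤ ∑ k ∈ Finset.range (t+1), μ k * convPow μ m (t - k)
    exact Finset.sum_nonneg fun k _ => mul_nonneg (hnn k) (ih (t - k))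

lemma convPow_le_pow {μ : ℕ → ℝ} (hnn : ∀ a, 0 ≤ μ a) (hsum : Summable μ) :
    ∀ m t, convPow μ m t ≤ (∑' a, μ a) ^ m := by
  have hM0 : 0 ≤ ∑' a, μ a := tsum_nonneg hnn
  intro m
  induction m with
  | zero => intro t; show (if t = 0 then (1:ℝ) else 0) ≤ 1; split <;> norm_num
  | succ m ih =>
    intro t
    calc conv μ (convPow μ m) t ≤ ∑ k ∈ Finset.range (t+1), μ k * (∑' a, μ a)^m := by
          refine Finset.sum_le_sum fun k _ => ?_
          exact mul_le_mul_of_nonneg_left (ih (t-k)) (hnn k)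
      _ = (∑ k ∈ Finset.range (t+1), μ k) * (∑' a, μ a)^m := by rw [Finset.sum_mul]
      _ ≤ (∑' a, μ a) * (∑' a, μ a)^m := by
          refine mul_le_mul_of_nonneg_right ?_ (pow_nonneg hM0 m)
          exact Summable.sum_le_tsum _ (fun i _ => hnn i) hsum
      _ = (∑' a, μ a)^(m+1) := by ring

lemma choose_le_two_pow_real (n k : ℕ) : (n.choose k : ℝ) ≤ 2 ^ n := by
  rcases le_or_gt k n with h | h
  · have : n.choose k ≤ 2 ^ n := by
      calc n.choose k ≤ ∑ m ∈ Finset.range (n+1), n.choose m :=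
            Finset.single_le_sum (fun i _ => Nat.zero_le _) (Finset.mem_range.mpr (by omega))
        _ = 2 ^ n := Nat.sum_range_choose n
    calc (n.choose k : ℝ) ≤ ((2:ℕ) ^ n : ℝ) := by exact_mod_cast this
      _ = 2 ^ n := by push_cast; ring
  · rw [Nat.choose_eq_zero_of_lt h, Nat.cast_zero]
    positivity

lemma pow_sub_pow_le_real : ∀ (t : ℕ) (u v c : ℝ), 0 ≤ v → v ≤ u → u ≤ c →
    u ^ t - v ^ t ≤ (t : ℝ) * c ^ (t - 1) * (u - v) := by
  intro t
  induction t with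
  | zero => intro u v c _ _ _; norm_num
  | succ t ih =>
    intro u v c hv hvu huc
    have hu : 0 ≤ u := le_trans hv hvu
    have hc : 0 ≤ c := le_trans hu huc
    have key : u ^ (t+1) - v ^ (t+1) = u * (u^t - v^t) + v^t * (u - v) := by ring
    have h1 : u * (u^t - v^t) ≤ (t:ℝ) * c ^ t * (u - v) := by
      cases t with
      | zero => norm_num
      | succ s =>
        calc u * (u^(s+1) - v^(s+1)) ≤ c * (u^(s+1) - v^(s+1)) := by
              refine mul_le_mul_of_nonneg_right huc ?_
              have := pow_le_pow_left₀ hv hvu (s+1)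
              linarith
          _ ≤ c * (((s+1:ℕ):ℝ) * c ^ (s+1-1) * (u - v)) := by
              refine mul_le_mul_of_nonneg_left (ih u v c hv hvu huc) hc
          _ = ((s+1:ℕ):ℝ) * (c * c ^ s) * (u-v) := by
              rw [show s + 1 - 1 = s from rfl]; ring
          _ = ((s+1:ℕ):ℝ) * c ^ (s+1) * (u-v) := by rw [← pow_succ']
    have h2 : v^t * (u - v) ≤ c^t * (u - v) := by
      refine mul_le_mul_of_nonneg_right ?_ (by linarith)
      exact pow_le_pow_left₀ hv (le_trans hvu huc) t
    rw [key]
    have : ((t+1 : ℕ):ℝ) * c ^ (t+1-1) * (u-v) = (t:ℝ) * c^t * (u-v) + c^t * (u-v) := by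
      rw [show t+1-1 = t from rfl]; push_cast; ring
    linarith

lemma PosCoeff_zero : PosCoeff (0 : PowerSeries ℝ) := fun a => by simp
lemma PosCoeff_one : PosCoeff (1 : PowerSeries ℝ) := fun a => by
  rw [PowerSeries.coeff_one]; split <;> norm_num

lemma fp_posCoeff (φ : ℕ → PowerSeries ℝ) (hφ : ∀ i, PosCoeff (φ i)) :
    ∀ n k, PosCoeff (fp φ n k) := by
  intro n
  induction n with
  | zero =>
    intro k
    rcases eq_or_ne k 0 with h | h
    · subst h; exact PosCoeff_one
    · show PosCoeff (if k = 0 then 1 else 0); rw [if_neg h]; exact PosCoeff_zero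
  | succ n ih =>
    intro k
    rcases k with _ | k
    · exact PosCoeff_zero
    · rw [fp_succ]
      exact PosCoeff.sum fun i _ => PosCoeff.mul (hφ i) (ih (k+i))
-- ===================== main theorem =====================

set_option maxHeartbeats 3000000 in
theorem stmt_6 (μ : ℕ → ℝ) (hnn : ∀ a, 0 ≤ μ a) (hsum : Summable μ)
    (hne : μ ≠ 0) (g : ℝ → ℝ) (hg : ∀ x : ℝ, g x = ∑' a : ℕ, x ^ a * μ a)
    (p q : ℝ) (hp : 0 < p) (hq : 0 < q) :
    ∃ ε > (0 : ℝ), ∀ x y : ℝ, 0 < x → x < ε → 0 < y → y < ε →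
      (∑' a : ℕ, ∑' m : ℕ, x ^ a * y ^ (m + 1) * (1 / (m + 1 : ℝ)) *
          (Nat.choose (m + a) a : ℝ) * q ^ m * p ^ a * convPow μ (m + 1) (m + a)) =
        y * g (p * x + q * (∑' a : ℕ, ∑' m : ℕ, x ^ a * y ^ (m + 1) *
          (1 / (m + 1 : ℝ)) * (Nat.choose (m + a) a : ℝ) * q ^ m * p ^ a *
          convPow μ (m + 1) (m + a))) ∧
      ∀ z : ℝ, 0 ≤ z → z ≤ ε → z = y * g (p * x + q * z) →
        z = ∑' a : ℕ, ∑' m : ℕ, x ^ a * y ^ (m + 1) * (1 / (m + 1 : ℝ)) *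
          (Nat.choose (m + a) a : ℝ) * q ^ m * p ^ a * convPow μ (m + 1) (m + a) := by
  classical
  set M := ∑' a, μ a with hMdef
  have hM0 : 0 ≤ M := tsum_nonneg hnn
  set ε : ℝ := min ((4*p)⁻¹) (min ((4*q)⁻¹) ((16*(q+1)*(M+1))⁻¹)) with hεdef
  have hεpos : 0 < ε := by
    refine lt_min (by positivity) (lt_min (by positivity) (by positivity))
  refine ⟨ε, hεpos, ?_⟩
  intro x y hx hxε hy hyε
  -- numeric bounds
  have hpx : p * x < 1/4 := by
    have h1 : x < (4*p)⁻¹ := lt_of_lt_of_le hxε (min_le_left _ _)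
    calc p * x < p * (4*p)⁻¹ := by exact mul_lt_mul_of_pos_left h1 hp
      _ = 1/4 := by field_simp
  have hqεle : q * ε ≤ 1/4 := by
    have h1 : ε ≤ (4*q)⁻¹ := le_trans (min_le_right _ _) (min_le_left _ _)
    calc q * ε ≤ q * (4*q)⁻¹ := mul_le_mul_of_nonneg_left h1 (le_of_lt hq)
      _ = 1/4 := by field_simp
  have hyM : y * ((q+1)*(M+1)) < 1/16 := by
    have h1 : y < (16*(q+1)*(M+1))⁻¹ :=
      lt_of_lt_of_le hyε (le_trans (min_le_right _ _) (min_le_right _ _))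
    calc y * ((q+1)*(M+1)) < (16*(q+1)*(M+1))⁻¹ * ((q+1)*(M+1)) := by
          exact mul_lt_mul_of_pos_right h1 (by positivity)
      _ = 1/16 := by field_simp
  have hqMy : q * M * y ≤ y * ((q+1)*(M+1)) := by nlinarith [hnn 0]
  have h2px : 2 * (p*x) ≤ 1/2 := by linarith
  have h2qMy : 2 * (q * M * y) ≤ 1/2 := by nlinarith
  -- hat setup
  set Wq : ℕ → PowerSeries ℝ := W μ p q with hWqdef
  set βS : ℕ → PowerSeries ℝ := fun n => fp Wq n 1 with hβdef
  have hWpos : ∀ i, PosCoeff (Wq i) := by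
    intro i a
    rw [hWqdef, W, coeff_mk]
    have := hnn (i+a)
    positivity
  have hfpPos : ∀ n k, PosCoeff (fp Wq n k) := fp_posCoeff Wq hWpos
  -- coefficient identity for βS
  have cβ : ∀ m a : ℕ, PowerSeries.coeff a (βS (m+1))
      = 1/(m+1:ℝ) * (Nat.choose (m+a) a : ℝ) * q^m * p^a * convPow μ (m+1) (m+a) := by
    intro m a
    have hh := hitting Wq (m+1) 1 (by omega)
    rw [Nat.cast_one, one_mul, show m + 1 - 1 = m from rfl] at hh
    have h2 := congrArg (PowerSeries.coeff a) hh
    rw [show ((m+1:ℕ) : PowerSeries ℝ) = PowerSeries.C ((m+1:ℕ):ℝ) from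
      (map_natCast (PowerSeries.C) (m+1)).symm, PowerSeries.coeff_C_mul,
      coeff_convPowR_W] at h2
    have hm1 : ((m:ℝ)+1) ≠ 0 := by positivity
    have hcs : ((m+a).choose a : ℝ) = ((m+a).choose m : ℝ) := by
      have hn := Nat.choose_symm (Nat.le_add_right m a)
      rw [show m + a - m = a from by omega] at hn
      exact_mod_cast congrArg (fun t : ℕ => (t:ℝ)) hn
    apply mul_left_cancel₀ hm1
    push_cast at h2
    rw [show βS (m+1) = fp Wq (m+1) 1 from rfl, h2, hcs]
    calc (((m+a).choose m : ℝ)) * p ^ a * q ^ m * convPow μ (m+1) (m+a)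
        = (((m:ℝ)+1) * (1/((m:ℝ)+1))) * ((((m+a).choose m : ℝ)) * q ^ m * p ^ a
            * convPow μ (m+1) (m+a)) := by
          rw [mul_one_div, div_self hm1]
          ring
      _ = ((m:ℝ)+1) * (1/((m:ℝ)+1) * (((m+a).choose m : ℝ)) * q^m * p^a
            * convPow μ (m+1) (m+a)) := by ring
  set Sh : ℝ≥0∞ := ∑' n, (ENNReal.ofReal y)^n * ev (ENNReal.ofReal x) (βS n) with hShdef
  -- hat version of each summand
  have eT : ∀ a m : ℕ, ENNReal.ofReal (x ^ a * y ^ (m + 1) * (1 / (m + 1 : ℝ)) *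
        (Nat.choose (m + a) a : ℝ) * q ^ m * p ^ a * convPow μ (m + 1) (m + a))
      = (ENNReal.ofReal x)^a * (ENNReal.ofReal y)^(m+1) * ENNReal.ofReal (PowerSeries.coeff a (βS (m+1))) := by
    intro a m
    have hν := convPow_nonneg hnn (m+1) (m+a)
    rw [cβ m a]
    rw [show x ^ a * y ^ (m + 1) * (1 / (m + 1 : ℝ)) * (Nat.choose (m + a) a : ℝ)
          * q ^ m * p ^ a * convPow μ (m + 1) (m + a)
        = (x^a * y^(m+1)) * (1/(m+1:ℝ) * (Nat.choose (m+a) a : ℝ) * q^m * p^a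
            * convPow μ (m+1) (m+a)) from by ring]
    rw [ENNReal.ofReal_mul (by positivity), ENNReal.ofReal_mul (by positivity),
      ENNReal.ofReal_pow hx.le, ENNReal.ofReal_pow hy.le]
  have hSh_shift : Sh = ∑' m : ℕ, (ENNReal.ofReal y)^(m+1) * ev (ENNReal.ofReal x) (βS (m+1)) := by
    rw [hShdef, tsum_eq_zero_add' ENNReal.summable]
    have hβ0 : βS 0 = 0 := by
      rw [hβdef]
      show (if (1:ℕ) = 0 then 1 else 0 : PowerSeries ℝ) = 0
      norm_num
    rw [hβ0, ev_zero_of, mul_zero, zero_add]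
  have hS2 : (∑' (a : ℕ) (m : ℕ), ENNReal.ofReal (x ^ a * y ^ (m + 1) * (1 / (m + 1 : ℝ)) *
        (Nat.choose (m + a) a : ℝ) * q ^ m * p ^ a * convPow μ (m + 1) (m + a))) = Sh := by
    calc (∑' (a : ℕ) (m : ℕ), ENNReal.ofReal (x ^ a * y ^ (m + 1) * (1 / (m + 1 : ℝ)) *
        (Nat.choose (m + a) a : ℝ) * q ^ m * p ^ a * convPow μ (m + 1) (m + a)))
        = ∑' (a : ℕ) (m : ℕ), (ENNReal.ofReal x)^a * (ENNReal.ofReal y)^(m+1)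
            * ENNReal.ofReal (PowerSeries.coeff a (βS (m+1))) :=
          tsum_congr fun a => tsum_congr fun m => eT a m
      _ = ∑' (m : ℕ) (a : ℕ), (ENNReal.ofReal x)^a * (ENNReal.ofReal y)^(m+1)
            * ENNReal.ofReal (PowerSeries.coeff a (βS (m+1))) := ENNReal.tsum_comm
      _ = ∑' (m : ℕ), (ENNReal.ofReal y)^(m+1) * ev (ENNReal.ofReal x) (βS (m+1)) := by
          refine tsum_congr fun m => ?_
          rw [ev, ← ENNReal.tsum_mul_left]
          refine tsum_congr fun a => ?_
          ring
      _ = Sh := hSh_shift.symm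
  have hgeo2 : ∀ u : ℝ, 0 ≤ u → u ≤ 1/2 → (∑' (n:ℕ), (ENNReal.ofReal u)^n) ≤ 2 := by
    intro u h0 h12
    have hle : ENNReal.ofReal u ≤ 2⁻¹ := by
      calc ENNReal.ofReal u ≤ ENNReal.ofReal (1/2) := ENNReal.ofReal_le_ofReal h12
        _ = 2⁻¹ := by rw [one_div, ENNReal.ofReal_inv_of_pos (by norm_num), ENNReal.ofReal_ofNat]
    calc (∑' (n:ℕ), (ENNReal.ofReal u)^n) ≤ ∑' (n:ℕ), (2⁻¹:ℝ≥0∞)^n :=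
          ENNReal.tsum_le_tsum fun n => pow_le_pow_left' hle n
      _ = (1 - 2⁻¹)⁻¹ := ENNReal.tsum_geometric _
      _ = 2 := by rw [ENNReal.one_sub_inv_two, inv_inv]
  have hTle : ∀ a m : ℕ, x ^ a * y ^ (m + 1) * (1 / (m + 1 : ℝ)) *
        (Nat.choose (m + a) a : ℝ) * q ^ m * p ^ a * convPow μ (m + 1) (m + a)
      ≤ (y*M) * (2*(p*x))^a * (2*(q*M*y))^m := by
    intro a m
    have c1 : (0:ℝ) ≤ ((m+a).choose a : ℝ) := Nat.cast_nonneg _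
    have c2 := convPow_nonneg hnn (m+1) (m+a)
    have c3 := convPow_le_pow hnn hsum (m+1) (m+a)
    have c4 := choose_le_two_pow_real (m+a) a
    have h1 : 1/((m:ℝ)+1) ≤ 1 := by
      rw [div_le_one (by positivity)]
      linarith [Nat.cast_nonneg (α := ℝ) m]
    have hb2 : (1/((m:ℝ)+1)) * ((m+a).choose a : ℝ) * convPow μ (m+1) (m+a)
        ≤ 1 * 2^(m+a) * M^(m+1) := by
      refine mul_le_mul ?_ c3 c2 (by positivity)
      exact mul_le_mul h1 c4 c1 zero_le_one
    calc x ^ a * y ^ (m + 1) * (1 / (m + 1 : ℝ)) * (Nat.choose (m + a) a : ℝ)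
          * q ^ m * p ^ a * convPow μ (m + 1) (m + a)
        = (x^a * y^(m+1) * q^m * p^a) * ((1/((m:ℝ)+1)) * ((m+a).choose a : ℝ)
            * convPow μ (m+1) (m+a)) := by ring
      _ ≤ (x^a * y^(m+1) * q^m * p^a) * (1 * 2^(m+a) * M^(m+1)) := by
          refine mul_le_mul_of_nonneg_left hb2 (by positivity)
      _ = (y*M) * (2*(p*x))^a * (2*(q*M*y))^m := by
          rw [pow_add]
          ring
  have hbound : Sh ≤ ENNReal.ofReal (y*M) * 4 := by
    rw [← hS2]
    calc (∑' (a : ℕ) (m : ℕ), ENNReal.ofReal (x ^ a * y ^ (m + 1) * (1 / (m + 1 : ℝ)) *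
        (Nat.choose (m + a) a : ℝ) * q ^ m * p ^ a * convPow μ (m + 1) (m + a)))
        ≤ ∑' (a : ℕ) (m : ℕ), ENNReal.ofReal ((y*M) * (2*(p*x))^a * (2*(q*M*y))^m) :=
          ENNReal.tsum_le_tsum fun a => ENNReal.tsum_le_tsum fun m =>
            ENNReal.ofReal_le_ofReal (hTle a m)
      _ = ∑' (a : ℕ) (m : ℕ), ENNReal.ofReal (y*M) * (ENNReal.ofReal (2*(p*x)))^a
            * (ENNReal.ofReal (2*(q*M*y)))^m := by
          refine tsum_congr fun a => tsum_congr fun m => ?_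
          rw [ENNReal.ofReal_mul (by positivity), ENNReal.ofReal_mul (by positivity),
            ENNReal.ofReal_pow (by positivity), ENNReal.ofReal_pow (by positivity)]
      _ = ENNReal.ofReal (y*M) * (∑' (a:ℕ), (ENNReal.ofReal (2*(p*x)))^a)
            * (∑' (m:ℕ), (ENNReal.ofReal (2*(q*M*y)))^m) := by
          have e1 : ∀ a:ℕ, (∑' (m:ℕ), ENNReal.ofReal (y*M) * (ENNReal.ofReal (2*(p*x)))^a
              * (ENNReal.ofReal (2*(q*M*y)))^m)
              = ENNReal.ofReal (y*M) * (ENNReal.ofReal (2*(p*x)))^a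
                * ∑' (m:ℕ), (ENNReal.ofReal (2*(q*M*y)))^m := fun a => ENNReal.tsum_mul_left
          rw [tsum_congr e1, ENNReal.tsum_mul_right, ENNReal.tsum_mul_left]
      _ ≤ ENNReal.ofReal (y*M) * 2 * 2 := by
          refine mul_le_mul' (mul_le_mul' (le_refl _) ?_) ?_
          · exact hgeo2 _ (by positivity) h2px
          · exact hgeo2 _ (by positivity) h2qMy
      _ = ENNReal.ofReal (y*M) * 4 := by
          rw [mul_assoc]
          norm_num
  have hfin : Sh ≠ ⊤ :=
    (lt_of_le_of_lt hbound (ENNReal.mul_lt_top ENNReal.ofReal_lt_top (by norm_num))).ne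
  set S : ℝ := ∑' a : ℕ, ∑' m : ℕ, x ^ a * y ^ (m + 1) * (1 / (m + 1 : ℝ)) *
      (Nat.choose (m + a) a : ℝ) * q ^ m * p ^ a * convPow μ (m + 1) (m + a) with hSdef
  have hSr : S = Sh.toReal := by
    have houter : (∑' (a : ℕ) (m : ℕ), ENNReal.ofReal (x ^ a * y ^ (m + 1) * (1 / (m + 1 : ℝ)) *
        (Nat.choose (m + a) a : ℝ) * q ^ m * p ^ a * convPow μ (m + 1) (m + a))) ≠ ⊤ := by
      rw [hS2]; exact hfin
    have hinner : ∀ a : ℕ, (∑' (m : ℕ), ENNReal.ofReal (x ^ a * y ^ (m + 1) * (1 / (m + 1 : ℝ)) *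
        (Nat.choose (m + a) a : ℝ) * q ^ m * p ^ a * convPow μ (m + 1) (m + a))) ≠ ⊤ :=
      fun a => ne_top_of_le_ne_top houter (ENNReal.le_tsum a)
    have hTnn : ∀ a m : ℕ, 0 ≤ x ^ a * y ^ (m + 1) * (1 / (m + 1 : ℝ)) *
        (Nat.choose (m + a) a : ℝ) * q ^ m * p ^ a * convPow μ (m + 1) (m + a) := by
      intro a m
      have := convPow_nonneg hnn (m+1) (m+a)
      positivity
    calc S = ∑' (a : ℕ), (∑' (m : ℕ), ENNReal.ofReal (x ^ a * y ^ (m + 1) * (1 / (m + 1 : ℝ)) *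
        (Nat.choose (m + a) a : ℝ) * q ^ m * p ^ a * convPow μ (m + 1) (m + a))).toReal := by
          rw [hSdef]
          refine tsum_congr fun a => ?_
          rw [ENNReal.tsum_toReal_eq (fun m => ENNReal.ofReal_ne_top)]
          exact tsum_congr fun m => (ENNReal.toReal_ofReal (hTnn a m)).symm
      _ = (∑' (a : ℕ) (m : ℕ), ENNReal.ofReal (x ^ a * y ^ (m + 1) * (1 / (m + 1 : ℝ)) *
        (Nat.choose (m + a) a : ℝ) * q ^ m * p ^ a * convPow μ (m + 1) (m + a))).toReal :=
          (ENNReal.tsum_toReal_eq hinner).symm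
      _ = Sh.toReal := by rw [hS2]
  have hSnn : 0 ≤ S := by rw [hSr]; exact ENNReal.toReal_nonneg
  have hS4 : S ≤ 4*(y*M) := by
    rw [hSr]
    refine ENNReal.toReal_le_of_le_ofReal (by positivity) ?_
    refine le_trans hbound (le_of_eq ?_)
    rw [show (4:ℝ)*(y*M) = (y*M)*4 from by ring,
       ENNReal.ofReal_mul (show (0:ℝ) ≤ y*M by positivity),
       show ENNReal.ofReal (4:ℝ) = 4 from by
         rw [show ((4:ℝ)) = ((4:ℕ):ℝ) from by norm_num, ENNReal.ofReal_natCast]; norm_num]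
  -- functional equation, hat version
  have hpowk : ∀ k, Sh^k = ∑' N, (ENNReal.ofReal y)^N * ev (ENNReal.ofReal x) (fp Wq N k) := by
    intro k
    induction k with
    | zero =>
      rw [pow_zero, tsum_eq_sum (s := {0}) (fun N hN => by
        have hN0 : N ≠ 0 := by simpa using hN
        have : fp Wq N 0 = 0 := by
          rw [fp_zero_right, if_neg hN0]
        rw [this, ev_zero_of, mul_zero])]
      rw [Finset.sum_singleton]
      have : fp Wq 0 0 = 1 := rfl
      rw [this, ev_one, pow_zero, one_mul]
    | succ k ih =>
      rw [pow_succ, ih, hShdef, enn_cauchy]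
      refine tsum_congr fun N => ?_
      have step : ∀ j ∈ Finset.range (N+1),
          ((ENNReal.ofReal y)^j * ev (ENNReal.ofReal x) (fp Wq j k))
            * ((ENNReal.ofReal y)^(N-j) * ev (ENNReal.ofReal x) (βS (N-j)))
          = (ENNReal.ofReal y)^N
              * ev (ENNReal.ofReal x) (fp Wq j k * fp Wq (N-j) 1) := by
        intro j hj
        have hj' : j ≤ N := by simpa [Nat.lt_succ_iff] using hj
        rw [ev_mul _ (hfpPos j k) (hfpPos (N-j) 1)]
        rw [show βS (N-j) = fp Wq (N-j) 1 from rfl]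
        rw [show (ENNReal.ofReal y)^N = (ENNReal.ofReal y)^j * (ENNReal.ofReal y)^(N-j) from by
          rw [← pow_add]; congr 1; omega]
        ring
      rw [Finset.sum_congr rfl step, ← Finset.mul_sum,
        ← ev_sum _ _ _ (fun j _ => PosCoeff.mul (hfpPos j k) (hfpPos (N-j) 1)),
        ← fp_conv Wq N k 1]
  -- evaluation of W-series
  have hWev : ∀ k : ℕ, ev (ENNReal.ofReal x) (Wq k)
      = (ENNReal.ofReal q)^k * ∑' a : ℕ, (((k+a).choose k : ℕ) : ℝ≥0∞)
          * (ENNReal.ofReal (p*x))^a * ENNReal.ofReal (μ (k+a)) := by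
    intro k
    rw [ev, ← ENNReal.tsum_mul_left]
    refine tsum_congr fun a => ?_
    rw [show PowerSeries.coeff a (Wq k)
        = ((k+a).choose k : ℝ) * p^a * q^k * μ (k+a) from coeff_mk _ _]
    rw [ENNReal.ofReal_mul (by positivity), ENNReal.ofReal_mul (by positivity),
       ENNReal.ofReal_mul (by positivity), ENNReal.ofReal_pow hp.le,
       ENNReal.ofReal_pow hq.le, ENNReal.ofReal_natCast,
       ENNReal.ofReal_mul hp.le, mul_pow]
    ring
  -- expansion of the composed series
  have hgexp : (∑' t, (ENNReal.ofReal (p*x) + ENNReal.ofReal q * Sh)^t * ENNReal.ofReal (μ t))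
      = ∑' k, ev (ENNReal.ofReal x) (Wq k) * Sh^k := by
    calc (∑' t, (ENNReal.ofReal (p*x) + ENNReal.ofReal q * Sh)^t * ENNReal.ofReal (μ t))
        = ∑' (t : ℕ) (k : ℕ), ((t.choose k : ℕ) : ℝ≥0∞) * (ENNReal.ofReal q * Sh)^k
            * (ENNReal.ofReal (p*x))^(t-k) * ENNReal.ofReal (μ t) := by
          refine tsum_congr fun t => ?_
          rw [add_comm (ENNReal.ofReal (p*x)), add_pow, Finset.sum_mul]
          rw [tsum_eq_sum (s := Finset.range (t+1)) (fun k hk => by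
            have : t < k := by simpa [Nat.lt_succ_iff] using hk
            rw [Nat.choose_eq_zero_of_lt this]
            simp)]
          refine Finset.sum_congr rfl fun k hk => ?_
          ring
      _ = ∑' (k : ℕ) (t : ℕ), ((t.choose k : ℕ) : ℝ≥0∞) * (ENNReal.ofReal q * Sh)^k
            * (ENNReal.ofReal (p*x))^(t-k) * ENNReal.ofReal (μ t) := ENNReal.tsum_comm
      _ = ∑' k, ev (ENNReal.ofReal x) (Wq k) * Sh^k := by
          refine tsum_congr fun k => ?_
          have hreindex : (∑' (t : ℕ), ((t.choose k : ℕ) : ℝ≥0∞) * (ENNReal.ofReal q * Sh)^k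
              * (ENNReal.ofReal (p*x))^(t-k) * ENNReal.ofReal (μ t))
              = ∑' (a : ℕ), (((k+a).choose k : ℕ) : ℝ≥0∞) * (ENNReal.ofReal q * Sh)^k
                  * (ENNReal.ofReal (p*x))^a * ENNReal.ofReal (μ (k+a)) := by
            rw [← Function.Injective.tsum_eq (f := fun t : ℕ => ((t.choose k : ℕ) : ℝ≥0∞)
                * (ENNReal.ofReal q * Sh)^k * (ENNReal.ofReal (p*x))^(t-k)
                * ENNReal.ofReal (μ t)) (g := fun a : ℕ => k + a)
                (fun a b hab => Nat.add_left_cancel hab) ?_]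
            · refine tsum_congr fun a => ?_
              simp only [Nat.add_sub_cancel_left]
            · intro t ht
              rcases le_or_gt k t with h | h
              · exact ⟨t - k, show k + (t - k) = t from by omega⟩
              · exfalso
                apply ht
                simp [Nat.choose_eq_zero_of_lt h]
          rw [hreindex, hWev, mul_pow]
          rw [← ENNReal.tsum_mul_left, ← ENNReal.tsum_mul_right]
          refine tsum_congr fun a => ?_
          ring
  -- resummation via the recursion for fp
  have hmain : (∑' k, ev (ENNReal.ofReal x) (Wq k) * Sh^k)
      = ∑' N, (ENNReal.ofReal y)^N * ev (ENNReal.ofReal x) (βS (N+1)) := by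
    calc (∑' k, ev (ENNReal.ofReal x) (Wq k) * Sh^k)
        = ∑' (k : ℕ) (N : ℕ), ev (ENNReal.ofReal x) (Wq k)
            * ((ENNReal.ofReal y)^N * ev (ENNReal.ofReal x) (fp Wq N k)) := by
          refine tsum_congr fun k => ?_
          rw [hpowk k, ← ENNReal.tsum_mul_left]
      _ = ∑' (N : ℕ) (k : ℕ), ev (ENNReal.ofReal x) (Wq k)
            * ((ENNReal.ofReal y)^N * ev (ENNReal.ofReal x) (fp Wq N k)) := ENNReal.tsum_comm
      _ = ∑' N, (ENNReal.ofReal y)^N * ev (ENNReal.ofReal x) (βS (N+1)) := by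
          refine tsum_congr fun N => ?_
          rw [tsum_eq_sum (s := Finset.range (N+2)) (fun k hk => by
            have hk' : N < k := by simp only [Finset.mem_range] at hk; omega
            rw [fp_eq_zero_of_lt Wq N k hk', ev_zero_of, mul_zero, mul_zero])]
          have step : ∀ k ∈ Finset.range (N+2),
              ev (ENNReal.ofReal x) (Wq k)
                * ((ENNReal.ofReal y)^N * ev (ENNReal.ofReal x) (fp Wq N k))
              = (ENNReal.ofReal y)^N
                  * ev (ENNReal.ofReal x) (Wq k * fp Wq N k) := by
            intro k _
            rw [ev_mul _ (hWpos k) (hfpPos N k)]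
            ring
          rw [Finset.sum_congr rfl step, ← Finset.mul_sum,
            ← ev_sum _ _ _ (fun k _ => PosCoeff.mul (hWpos k) (hfpPos N k))]
          congr 2
          have := fp_succ Wq N 0
          simp only [zero_add] at this
          rw [show βS (N+1) = fp Wq (N+1) 1 from rfl, this]
  have hfe : Sh = ENNReal.ofReal y * (∑' t, (ENNReal.ofReal (p*x) + ENNReal.ofReal q * Sh)^t * ENNReal.ofReal (μ t)) := by
    rw [hgexp, hmain]
    calc Sh = ∑' m : ℕ, (ENNReal.ofReal y)^(m+1) * ev (ENNReal.ofReal x) (βS (m+1)) := hSh_shift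
      _ = ∑' m : ℕ, ENNReal.ofReal y * ((ENNReal.ofReal y)^m * ev (ENNReal.ofReal x) (βS (m+1))) := by
          refine tsum_congr fun m => ?_
          rw [pow_succ]
          ring
      _ = ENNReal.ofReal y * ∑' N, (ENNReal.ofReal y)^N * ev (ENNReal.ofReal x) (βS (N+1)) :=
          ENNReal.tsum_mul_left
  have hg_hat : ∀ u : ℝ, 0 ≤ u → u ≤ 1 → ENNReal.ofReal (g u) = ∑' t, (ENNReal.ofReal u)^t * ENNReal.ofReal (μ t) := by
    intro u hu hu1
    rw [hg u]
    rw [ENNReal.ofReal_tsum_of_nonneg (fun t => mul_nonneg (pow_nonneg hu t) (hnn t))]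
    · congr 1
      funext t
      rw [ENNReal.ofReal_mul (pow_nonneg hu t), ENNReal.ofReal_pow hu]
    · refine Summable.of_nonneg_of_le (fun t => mul_nonneg (pow_nonneg hu t) (hnn t)) (fun t => ?_) hsum
      calc u^t * μ t ≤ 1 * μ t := by
            refine mul_le_mul_of_nonneg_right (pow_le_one₀ hu hu1) (hnn t)
        _ = μ t := one_mul _
  -- part 1
  have hqS : q * S ≤ 1/4 := by nlinarith
  have hu2 : p * x + q * S ≤ 1/2 := by linarith
  have hu2nn : 0 ≤ p * x + q * S := by positivity
  have part1 : S = y * g (p * x + q * S) := by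
    have he : ENNReal.ofReal (p * x + q * S) = ENNReal.ofReal (p*x) + ENNReal.ofReal q * Sh := by
      rw [ENNReal.ofReal_add (by positivity) (by positivity), ENNReal.ofReal_mul (le_of_lt hq)]
      congr 2
      rw [hSr, ENNReal.ofReal_toReal hfin]
    have hgu := hg_hat (p * x + q * S) hu2nn (by linarith)
    rw [he] at hgu
    have : ENNReal.ofReal S = ENNReal.ofReal y * ENNReal.ofReal (g (p * x + q * S)) := by
      rw [hgu, ← hfe, hSr, ENNReal.ofReal_toReal hfin]
    have hgnn : 0 ≤ g (p * x + q * S) := by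
      rw [hg]
      exact tsum_nonneg fun t => mul_nonneg (pow_nonneg hu2nn t) (hnn t)
    have := congrArg ENNReal.toReal this
    rwa [ENNReal.toReal_ofReal hSnn, ENNReal.toReal_mul,
      ENNReal.toReal_ofReal (le_of_lt hy), ENNReal.toReal_ofReal hgnn] at this
  refine ⟨part1, ?_⟩
  -- part 2 : uniqueness
  intro z hz0 hzε hzeq
  have gLip : ∀ u v : ℝ, 0 ≤ v → v ≤ u → u ≤ 1/2 → g u - g v ≤ 2*M*(u-v) ∧ 0 ≤ g u - g v := by
    intro u v hv hvu hu
    have hu0 : 0 ≤ u := le_trans hv hvu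
    have hsu : Summable (fun t : ℕ => u^t * μ t) := by
      refine Summable.of_nonneg_of_le (fun t => mul_nonneg (pow_nonneg hu0 t) (hnn t))
        (fun t => ?_) hsum
      calc u^t * μ t ≤ 1 * μ t :=
            mul_le_mul_of_nonneg_right (pow_le_one₀ hu0 (by linarith)) (hnn t)
        _ = μ t := one_mul _
    have hsv : Summable (fun t : ℕ => v^t * μ t) := by
      refine Summable.of_nonneg_of_le (fun t => mul_nonneg (pow_nonneg hv t) (hnn t))
        (fun t => ?_) hsum
      calc v^t * μ t ≤ 1 * μ t :=
            mul_le_mul_of_nonneg_right (pow_le_one₀ hv (by linarith)) (hnn t)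
        _ = μ t := one_mul _
    have hdiff : g u - g v = ∑' t : ℕ, (u^t - v^t) * μ t := by
      rw [hg u, hg v, ← Summable.tsum_sub hsu hsv]
      exact tsum_congr fun t => by ring
    have hptnn : ∀ t : ℕ, 0 ≤ (u^t - v^t) * μ t := fun t =>
      mul_nonneg (by linarith [pow_le_pow_left₀ hv hvu t]) (hnn t)
    have hptle : ∀ t : ℕ, (u^t - v^t) * μ t ≤ 2*(u-v) * μ t := by
      intro t
      refine mul_le_mul_of_nonneg_right ?_ (hnn t)
      have h1 := pow_sub_pow_le_real t u v (1/2) hv hvu hu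
      have h2 : (t:ℝ) * (1/2)^(t-1) ≤ 2 := by
        rcases t with _ | s
        · norm_num
        · have hlt : (s+1 : ℕ) < 2^(s+1) := Nat.lt_two_pow_self
          have hlt' : ((s+1 : ℕ) : ℝ) ≤ 2^(s+1) := by exact_mod_cast hlt.le
          have h2s : (0:ℝ) < 2^s := by positivity
          rw [show (s+1) - 1 = s from rfl]
          rw [show ((1:ℝ)/2)^s = (2^s)⁻¹ from by rw [one_div, inv_pow]]
          rw [show ((s+1:ℕ):ℝ) * (2^s)⁻¹ = ((s+1:ℕ):ℝ) / 2^s from by ring,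
            div_le_iff₀ h2s]
          calc ((s+1:ℕ):ℝ) ≤ 2^(s+1) := by exact_mod_cast hlt'
            _ = 2 * 2^s := by ring
      have h3 : (t:ℝ) * (1/2)^(t-1) * (u-v) ≤ 2 * (u-v) :=
        mul_le_mul_of_nonneg_right h2 (by linarith)
      linarith
    constructor
    · rw [hdiff]
      have hsum2 : Summable (fun t : ℕ => 2*(u-v) * μ t) := hsum.mul_left _
      calc (∑' t : ℕ, (u^t - v^t) * μ t) ≤ ∑' t : ℕ, 2*(u-v) * μ t :=
            Summable.tsum_le_tsum hptle ((hsu.sub hsv).congr (fun t => by ring)) hsum2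
        _ = 2*(u-v) * M := by rw [tsum_mul_left]
        _ = 2*M*(u-v) := by ring
    · rw [hdiff]
      exact tsum_nonneg hptnn
  have habs : |z - S| ≤ 2*q*M*y * |z - S| := by
    have hqz : q * z ≤ 1/4 := le_trans (mul_le_mul_of_nonneg_left hzε hq.le) hqεle
    have hu1le : p*x + q*z ≤ 1/2 := by linarith
    have hu1nn : (0:ℝ) ≤ p*x + q*z := by positivity
    have habs' : |g (p*x+q*z) - g (p*x+q*S)| ≤ 2*M*|(p*x+q*z) - (p*x+q*S)| := by
      rcases le_total (p*x+q*S) (p*x+q*z) with h | h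
      · obtain ⟨h1, h2⟩ := gLip (p*x+q*z) (p*x+q*S) hu2nn h hu1le
        rw [abs_of_nonneg h2, abs_of_nonneg (by linarith)]
        exact h1
      · obtain ⟨h1, h2⟩ := gLip (p*x+q*S) (p*x+q*z) hu1nn h hu2
        rw [abs_sub_comm, abs_of_nonneg h2, abs_sub_comm, abs_of_nonneg (by linarith)]
        exact h1
    have hzS : z - S = y * (g (p*x+q*z) - g (p*x+q*S)) := by
      rw [mul_sub, ← hzeq, ← part1]
    have hdiffu : |(p*x+q*z) - (p*x+q*S)| = q * |z - S| := by
      rw [show (p*x+q*z) - (p*x+q*S) = q * (z - S) from by ring, abs_mul,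
        abs_of_pos hq]
    calc |z - S| = y * |g (p*x+q*z) - g (p*x+q*S)| := by
          rw [hzS, abs_mul, abs_of_pos hy]
      _ ≤ y * (2*M*(q * |z - S|)) := by
          refine mul_le_mul_of_nonneg_left ?_ hy.le
          rw [← hdiffu]
          exact habs'
      _ = 2*q*M*y * |z - S| := by ring
  have : z = S := by
    have h18 : 2*q*M*y ≤ 1/8 := by nlinarith
    have habs2 : |z - S| ≤ (1/8) * |z-S| := by
      refine le_trans habs ?_
      exact mul_le_mul_of_nonneg_right h18 (abs_nonneg _)
    have : |z - S| ≤ 0 := by linarith [abs_nonneg (z - S)]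
    have := abs_eq_zero.mp (le_antisymm this (abs_nonneg _))
    linarith
  exact this
end

section
/- If μ is a probability measure on ℕ with mean Σ_a a·μ(a) = 1 - D < 1 (D > 0), then the family ν(m) := m^{-1}·μ^{*m}(m-1), m ∈ ℕ*, is a probability measure on ℕ*, i.e. Σ_{m≥1} m^{-1}·μ^{*m}(m-1) = 1. -/
open Finset PowerSeries

lemma conv_coeff (f g : ℕ → ℝ) (n : ℕ) :
    conv f g n = PowerSeries.coeff n (PowerSeries.mk f * PowerSeries.mk g) := by
  rw [PowerSeries.coeff_mul, Finset.Nat.sum_antidiagonal_eq_sum_range_succ_mk]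
  simp [conv]

lemma mk_convPow (f : ℕ → ℝ) (m : ℕ) :
    PowerSeries.mk (convPow f m) = (PowerSeries.mk f) ^ m := by
  induction m with
  | zero =>
    ext n
    simp [convPow, PowerSeries.coeff_one, PowerSeries.coeff_mk]
  | succ m ih =>
    ext n
    rw [PowerSeries.coeff_mk]
    show conv f (convPow f m) n = _
    rw [conv_coeff, ih, pow_succ']

lemma convPow_coeff (f : ℕ → ℝ) (m n : ℕ) :
    convPow f m n = PowerSeries.coeff n ((PowerSeries.mk f) ^ m) := by
  rw [← mk_convPow, PowerSeries.coeff_mk]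

lemma derivFun_pow (F : PowerSeries ℝ) (n : ℕ) :
    derivativeFun (F ^ (n + 1)) = (n + 1 : ℕ) • (F ^ n * derivativeFun F) := by
  induction n with
  | zero => simp
  | succ n ih =>
    rw [pow_succ', derivativeFun_mul, ih]
    rw [succ_nsmul]
    simp only [smul_eq_mul, smul_smul]
    ring_nf

lemma coeff_derivativeFun' (F : PowerSeries ℝ) (n : ℕ) :
    PowerSeries.coeff n (derivativeFun F) = PowerSeries.coeff (n + 1) F * (n + 1) :=
  coeff_derivative F n

lemma keyId (f : ℕ → ℝ) (n m : ℕ) :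
    (m : ℝ) * convPow f (n + 1) m
      = ((n : ℝ) + 1) * conv (fun b => (b : ℝ) * f b) (convPow f n) m := by
  have hX : PowerSeries.mk (fun b => (b : ℝ) * f b)
      = X * derivativeFun (PowerSeries.mk f) := by
    ext b
    cases b with
    | zero => simp [PowerSeries.coeff_mk]
    | succ b =>
      rw [PowerSeries.coeff_mk, PowerSeries.coeff_succ_X_mul, coeff_derivativeFun',
        PowerSeries.coeff_mk]
      push_cast; ring
  cases m with
  | zero => simp [conv]
  | succ m =>
    rw [convPow_coeff f (n + 1), conv_coeff, mk_convPow, hX, mul_assoc,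
      PowerSeries.coeff_succ_X_mul]
    have h1 : ((m : ℝ) + 1) * (PowerSeries.coeff (m + 1)) ((PowerSeries.mk f) ^ (n + 1))
        = (PowerSeries.coeff m) (derivativeFun ((PowerSeries.mk f) ^ (n + 1))) := by
      rw [coeff_derivativeFun']; ring
    push_cast
    rw [h1, derivFun_pow, map_nsmul, nsmul_eq_mul,
      mul_comm ((PowerSeries.mk f) ^ n) (derivativeFun (PowerSeries.mk f))]
    push_cast; ring

def Bfun (f : ℕ → ℝ) : ℕ → ℕ → ℝ
  | k, 0 => if k = 0 then 1 else 0
  | k, (n + 1) => if k = 0 then 0 else ∑ a ∈ Finset.range (n + 2), f a * Bfun f (k - 1 + a) n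

lemma Bfun_zero (f : ℕ → ℝ) (k : ℕ) : Bfun f k 0 = if k = 0 then 1 else 0 := rfl

lemma Bfun_succ (f : ℕ → ℝ) (k n : ℕ) (hk : k ≠ 0) :
    Bfun f k (n + 1) = ∑ a ∈ Finset.range (n + 2), f a * Bfun f (k - 1 + a) n := by
  rw [Bfun, if_neg hk]

lemma Bfun_zero_succ (f : ℕ → ℝ) (n : ℕ) : Bfun f 0 (n + 1) = 0 := by
  rw [Bfun, if_pos rfl]

lemma Bfun_eq_zero (f : ℕ → ℝ) (k n : ℕ) (h : n < k) : Bfun f k n = 0 := by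
  induction n generalizing k with
  | zero => rw [Bfun_zero, if_neg (by omega)]
  | succ n ih =>
    rw [Bfun_succ f k n (by omega)]
    refine Finset.sum_eq_zero fun a _ => ?_
    rw [ih (k - 1 + a) (by omega), mul_zero]

lemma Bfun_delta (f : ℕ → ℝ) (n : ℕ) : Bfun f 0 n = if n = 0 then 1 else 0 := by
  cases n with
  | zero => simp [Bfun_zero]
  | succ n => simp [Bfun_zero_succ]

lemma Bfun_nonneg (f : ℕ → ℝ) (hf : ∀ a, 0 ≤ f a) (k n : ℕ) : 0 ≤ Bfun f k n := by
  induction n generalizing k with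
  | zero => rw [Bfun_zero]; positivity
  | succ n ih =>
    rcases eq_or_ne k 0 with rfl | hk
    · rw [Bfun_zero_succ]
    · rw [Bfun_succ f k n hk]
      exact Finset.sum_nonneg fun a _ => mul_nonneg (hf a) (ih _)

lemma Bfun_one_succ (f : ℕ → ℝ) (m : ℕ) :
    Bfun f 1 (m + 1) = ∑ a ∈ Finset.range (m + 2), f a * Bfun f a m := by
  rw [Bfun_succ f 1 m one_ne_zero]
  simp

lemma Bfun_add (f : ℕ → ℝ) :
    ∀ n k l : ℕ, Bfun f (k + l) n = conv (Bfun f k) (Bfun f l) n := by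
  intro n
  induction n with
  | zero =>
    intro k l
    have hc : conv (Bfun f k) (Bfun f l) 0 = Bfun f k 0 * Bfun f l 0 := by
      simp [conv]
    rw [hc, Bfun_zero, Bfun_zero, Bfun_zero]
    by_cases hk : k = 0 <;> by_cases hl : l = 0 <;> simp [hk, hl]
  | succ n ih =>
    intro k l
    rcases Nat.eq_zero_or_pos k with rfl | hk
    · -- conv with delta
      rw [zero_add, conv]
      rw [Finset.sum_eq_single 0]
      · simp [Bfun_delta]
      · intro j _ hj
        rw [Bfun_delta, if_neg hj, zero_mul]
      · intro h; exact absurd (Finset.mem_range.2 (by omega)) h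
    · obtain ⟨k', rfl⟩ : ∃ k', k = k' + 1 := ⟨k - 1, by omega⟩
      rw [Bfun_succ f (k' + 1 + l) n (by omega)]
      have hstep : ∀ a, k' + 1 + l - 1 + a = (k' + a) + l := by omega
      calc ∑ a ∈ Finset.range (n + 2), f a * Bfun f (k' + 1 + l - 1 + a) n
          = ∑ a ∈ Finset.range (n + 2), f a * conv (Bfun f (k' + a)) (Bfun f l) n := by
            refine Finset.sum_congr rfl fun a _ => ?_
            rw [hstep a, ih (k' + a) l]
        _ = ∑ a ∈ Finset.range (n + 2), ∑ j ∈ Finset.range (n + 1),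
              f a * (Bfun f (k' + a) j * Bfun f l (n - j)) := by
            refine Finset.sum_congr rfl fun a _ => ?_
            rw [conv, Finset.mul_sum]
        _ = ∑ j ∈ Finset.range (n + 1), (∑ a ∈ Finset.range (n + 2),
              f a * Bfun f (k' + a) j) * Bfun f l (n - j) := by
            rw [Finset.sum_comm]
            refine Finset.sum_congr rfl fun j _ => ?_
            rw [Finset.sum_mul]
            refine Finset.sum_congr rfl fun a _ => ?_
            ring
        _ = ∑ j ∈ Finset.range (n + 1), Bfun f (k' + 1) (j + 1) * Bfun f l (n - j) := by
            refine Finset.sum_congr rfl fun j hj => ?_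
            rw [Finset.mem_range] at hj
            congr 1
            rw [Bfun_succ f (k' + 1) j (by omega)]
            refine (Finset.sum_subset (Finset.range_subset_range.2 (by omega)) ?_).symm
            intro a _ ha
            rw [Finset.mem_range, not_lt] at ha
            rw [Bfun_eq_zero f _ j (by omega), mul_zero]
        _ = conv (Bfun f (k' + 1)) (Bfun f l) (n + 1) := by
            symm
            rw [conv, Finset.sum_range_succ', Bfun_zero, if_neg (by omega), zero_mul, add_zero]
            exact Finset.sum_congr rfl fun j hj => by rw [Nat.succ_sub_succ]

lemma Bfun_dwass (f : ℕ → ℝ) :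
    ∀ n k : ℕ, 1 ≤ k → k ≤ n → (n : ℝ) * Bfun f k n = (k : ℝ) * convPow f n (n - k) := by
  intro n
  induction n with
  | zero => intro k hk hk'; omega
  | succ n ih =>
    intro k hk hk'
    rcases Nat.eq_zero_or_pos n with rfl | hn
    · -- n = 0, so k = 1
      have hk1 : k = 1 := by omega
      subst hk1
      simp [Bfun_succ f 1 0 one_ne_zero, Finset.sum_range_succ, Bfun_zero, convPow, conv]
    · set m := n + 1 - k with hmdef
      have hksub : k - 1 + (m + 1) = n + 1 := by omega
      rw [Bfun_succ f k n (by omega)]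
      -- restrict the sum to range (m+1)
      have hres : ∑ a ∈ Finset.range (n + 2), f a * Bfun f (k - 1 + a) n
          = ∑ a ∈ Finset.range (m + 1), f a * Bfun f (k - 1 + a) n := by
        refine (Finset.sum_subset (Finset.range_subset_range.2 (by omega)) ?_).symm
        intro a _ ha
        rw [Finset.mem_range, not_lt] at ha
        rw [Bfun_eq_zero f _ n (by omega), mul_zero]
      rw [hres]
      set P := convPow f (n + 1) m with hP
      set C := conv (fun b => (b : ℝ) * f b) (convPow f n) m with hC
      have hB : (n : ℝ) * ∑ a ∈ Finset.range (m + 1), f a * Bfun f (k - 1 + a) n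
          = ((k : ℝ) - 1) * P + C := by
        rw [Finset.mul_sum]
        have hterm : ∀ a ∈ Finset.range (m + 1),
            (n : ℝ) * (f a * Bfun f (k - 1 + a) n)
              = ((k : ℝ) - 1 + a) * (f a * convPow f n (m - a)) := by
          intro a ha
          rw [Finset.mem_range] at ha
          rcases Nat.eq_zero_or_pos (k - 1 + a) with h0 | hpos
          · -- k = 1, a = 0
            have hk1 : k = 1 := by omega
            have ha0 : a = 0 := by omega
            subst hk1; subst ha0
            have hBz : Bfun f 0 n = 0 := by
              obtain ⟨n', rfl⟩ : ∃ n', n = n' + 1 := ⟨n - 1, by omega⟩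
              exact Bfun_zero_succ f n'
            simp [hBz]
          · have h1 : (1:ℕ) ≤ k - 1 + a := hpos
            have h2 : k - 1 + a ≤ n := by omega
            have := ih (k - 1 + a) h1 h2
            have hsub : n - (k - 1 + a) = m - a := by omega
            rw [hsub] at this
            have hcast : ((k - 1 + a : ℕ) : ℝ) = (k : ℝ) - 1 + a := by
              push_cast [Nat.cast_sub (by omega : 1 ≤ k)]; ring
            calc (n : ℝ) * (f a * Bfun f (k - 1 + a) n)
                = f a * ((n : ℝ) * Bfun f (k - 1 + a) n) := by ring
              _ = f a * (((k - 1 + a : ℕ) : ℝ) * convPow f n (m - a)) := by rw [this]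
              _ = ((k : ℝ) - 1 + a) * (f a * convPow f n (m - a)) := by rw [hcast]; ring
        rw [Finset.sum_congr rfl hterm]
        have hsplit : ∀ a ∈ Finset.range (m + 1),
            ((k : ℝ) - 1 + a) * (f a * convPow f n (m - a))
              = ((k : ℝ) - 1) * (f a * convPow f n (m - a))
                + ((a : ℝ) * f a) * convPow f n (m - a) := by
          intro a _; ring
        rw [Finset.sum_congr rfl hsplit, Finset.sum_add_distrib, ← Finset.mul_sum]
        congr 1
      have hkey : (m : ℝ) * P = ((n : ℝ) + 1) * C := keyId f n m
      have hm : (m : ℝ) = (n : ℝ) + 1 - (k : ℝ) := by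
        rw [hmdef]; push_cast [Nat.cast_sub (by omega : k ≤ n + 1)]; ring
      have hn0 : (n : ℝ) ≠ 0 := Nat.cast_ne_zero.2 (by omega)
      apply mul_left_cancel₀ hn0
      push_cast
      push_cast at hB
      linear_combination ((n : ℝ) + 1) * hB - hkey + P * hm


lemma psum_conv_le (f g : ℕ → ℝ) (hf : ∀ n, 0 ≤ f n) (hg : ∀ n, 0 ≤ g n) (N : ℕ) :
    ∑ n ∈ Finset.range N, conv f g n
      ≤ (∑ n ∈ Finset.range N, f n) * (∑ n ∈ Finset.range N, g n) := by
  have h1 : ∀ n, conv f g n = ∑ p ∈ Finset.HasAntidiagonal.antidiagonal n, f p.1 * g p.2 := by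
    intro n
    rw [Finset.Nat.sum_antidiagonal_eq_sum_range_succ_mk]
    rfl
  have hdisj : (↑(Finset.range N) : Set ℕ).PairwiseDisjoint Finset.HasAntidiagonal.antidiagonal := by
    intro x _ y _ hxy
    rw [Function.onFun, Finset.disjoint_left]
    intro p hp hp'
    rw [Finset.HasAntidiagonal.mem_antidiagonal] at hp hp'
    exact hxy (by omega)
  calc ∑ n ∈ Finset.range N, conv f g n
      = ∑ p ∈ (Finset.range N).biUnion Finset.HasAntidiagonal.antidiagonal, f p.1 * g p.2 := by
        rw [Finset.sum_biUnion hdisj]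
        exact Finset.sum_congr rfl fun n _ => h1 n
    _ ≤ ∑ p ∈ Finset.range N ×ˢ Finset.range N, f p.1 * g p.2 := by
        apply Finset.sum_le_sum_of_subset_of_nonneg
        · intro p hp
          simp only [Finset.mem_biUnion, Finset.mem_range,
            Finset.HasAntidiagonal.mem_antidiagonal] at hp
          obtain ⟨n, hn, hpn⟩ := hp
          simp only [Finset.mem_product, Finset.mem_range]
          omega
        · intro p _ _
          exact mul_nonneg (hf _) (hg _)
    _ = (∑ n ∈ Finset.range N, f n) * (∑ n ∈ Finset.range N, g n) := by
        rw [Finset.sum_product, Finset.sum_mul_sum]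

section Main

variable {μ : ℕ → ℝ} (hnn : ∀ a, 0 ≤ μ a)

lemma psum_Bfun_le_pow (hnn : ∀ a, 0 ≤ μ a) (N k : ℕ) :
    ∑ n ∈ Finset.range N, Bfun μ k n ≤ (∑ n ∈ Finset.range N, Bfun μ 1 n) ^ k := by
  induction k with
  | zero =>
    simp only [pow_zero]
    calc ∑ n ∈ Finset.range N, Bfun μ 0 n
        = ∑ n ∈ Finset.range N, if n = 0 then (1:ℝ) else 0 :=
          Finset.sum_congr rfl fun n _ => Bfun_delta μ n
      _ ≤ 1 := by
          rw [Finset.sum_ite_eq' (Finset.range N) 0 (fun _ => (1:ℝ))]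
          split <;> norm_num
  | succ k ih =>
    have hconv : ∀ n, Bfun μ (k + 1) n = conv (Bfun μ 1) (Bfun μ k) n := by
      intro n
      rw [show k + 1 = 1 + k by ring, Bfun_add]
    calc ∑ n ∈ Finset.range N, Bfun μ (k + 1) n
        = ∑ n ∈ Finset.range N, conv (Bfun μ 1) (Bfun μ k) n :=
          Finset.sum_congr rfl fun n _ => hconv n
      _ ≤ (∑ n ∈ Finset.range N, Bfun μ 1 n) * (∑ n ∈ Finset.range N, Bfun μ k n) :=
          psum_conv_le _ _ (Bfun_nonneg μ hnn 1) (Bfun_nonneg μ hnn k) N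
      _ ≤ (∑ n ∈ Finset.range N, Bfun μ 1 n) * (∑ n ∈ Finset.range N, Bfun μ 1 n) ^ k := by
          apply mul_le_mul_of_nonneg_left ih
          exact Finset.sum_nonneg fun n _ => Bfun_nonneg μ hnn 1 n
      _ = (∑ n ∈ Finset.range N, Bfun μ 1 n) ^ (k + 1) := by rw [pow_succ']

lemma psum_Bfun_one_le (hnn : ∀ a, 0 ≤ μ a) (hsum : Summable μ) (hprob : ∑' a, μ a = 1) :
    ∀ N, ∑ m ∈ Finset.range N, Bfun μ 1 m ≤ 1 := by
  intro N
  induction N with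
  | zero => simp
  | succ N ih =>
    have hQN0 : 0 ≤ ∑ m ∈ Finset.range N, Bfun μ 1 m :=
      Finset.sum_nonneg fun n _ => Bfun_nonneg μ hnn 1 n
    rw [Finset.sum_range_succ']
    rw [Bfun_zero, if_neg one_ne_zero, add_zero]
    have h1 : ∀ m, Bfun μ 1 (m + 1) = ∑ a ∈ Finset.range (m + 2), μ a * Bfun μ a m :=
      Bfun_one_succ μ
    have h2 : ∀ m ∈ Finset.range N, Bfun μ 1 (m + 1)
        = ∑ a ∈ Finset.range (N + 1), μ a * Bfun μ a m := by
      intro m hm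
      rw [Finset.mem_range] at hm
      rw [h1 m]
      rcases le_or_gt (m + 2) (N + 1) with h | h
      · apply Finset.sum_subset (Finset.range_subset_range.2 h)
        intro a _ ha
        rw [Finset.mem_range, not_lt] at ha
        rw [Bfun_eq_zero μ a m (by omega), mul_zero]
      · refine (Finset.sum_subset (Finset.range_subset_range.2 (by omega)) ?_).symm
        intro a _ ha
        rw [Finset.mem_range, not_lt] at ha
        rw [Bfun_eq_zero μ a m (by omega), mul_zero]
    calc ∑ m ∈ Finset.range N, Bfun μ 1 (m + 1)
        = ∑ m ∈ Finset.range N, ∑ a ∈ Finset.range (N + 1), μ a * Bfun μ a m :=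
          Finset.sum_congr rfl h2
      _ = ∑ a ∈ Finset.range (N + 1), μ a * ∑ m ∈ Finset.range N, Bfun μ a m := by
          rw [Finset.sum_comm]
          exact Finset.sum_congr rfl fun a _ => (Finset.mul_sum _ _ _).symm
      _ ≤ ∑ a ∈ Finset.range (N + 1), μ a := by
          apply Finset.sum_le_sum
          intro a _
          have hb : ∑ m ∈ Finset.range N, Bfun μ a m ≤ 1 := by
            calc ∑ m ∈ Finset.range N, Bfun μ a m
                ≤ (∑ m ∈ Finset.range N, Bfun μ 1 m) ^ a := psum_Bfun_le_pow hnn N a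
              _ ≤ 1 := pow_le_one₀ hQN0 ih
          calc μ a * ∑ m ∈ Finset.range N, Bfun μ a m ≤ μ a * 1 :=
                mul_le_mul_of_nonneg_left hb (hnn a)
            _ = μ a := mul_one _
      _ ≤ 1 := hprob ▸ Summable.sum_le_tsum _ (fun a _ => hnn a) hsum

lemma summable_Bfun (hnn : ∀ a, 0 ≤ μ a) (hsum : Summable μ) (hprob : ∑' a, μ a = 1)
    (k : ℕ) : Summable (Bfun μ k) := by
  apply summable_of_sum_range_le (Bfun_nonneg μ hnn k)
  intro N
  calc ∑ n ∈ Finset.range N, Bfun μ k n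
      ≤ (∑ n ∈ Finset.range N, Bfun μ 1 n) ^ k := psum_Bfun_le_pow hnn N k
    _ ≤ 1 := pow_le_one₀ (Finset.sum_nonneg fun n _ => Bfun_nonneg μ hnn 1 n)
        (psum_Bfun_one_le hnn hsum hprob N)

lemma tsum_Bfun_pow (hnn : ∀ a, 0 ≤ μ a) (hsum : Summable μ) (hprob : ∑' a, μ a = 1)
    (k : ℕ) : ∑' n, Bfun μ k n = (∑' n, Bfun μ 1 n) ^ k := by
  induction k with
  | zero =>
    rw [pow_zero]
    calc ∑' n, Bfun μ 0 n = ∑' n : ℕ, if n = 0 then (1:ℝ) else 0 :=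
        tsum_congr fun n => Bfun_delta μ n
      _ = 1 := tsum_ite_eq 0 1
  | succ k ih =>
    have hnorm : ∀ j, Summable fun n => ‖Bfun μ j n‖ := by
      intro j
      apply (summable_Bfun hnn hsum hprob j).congr
      intro n
      rw [Real.norm_of_nonneg (Bfun_nonneg μ hnn j n)]
    calc ∑' n, Bfun μ (k + 1) n
        = ∑' n, conv (Bfun μ 1) (Bfun μ k) n := by
          refine tsum_congr fun n => ?_
          rw [show k + 1 = 1 + k by ring, Bfun_add]
      _ = (∑' n, Bfun μ 1 n) * (∑' n, Bfun μ k n) :=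
          (tsum_mul_tsum_eq_tsum_sum_range_of_summable_norm (hnorm 1) (hnorm k)).symm
      _ = (∑' n, Bfun μ 1 n) ^ (k + 1) := by rw [ih, pow_succ']

end Main


theorem stmt_9 (D : ℝ) (hD : 0 < D)
    (μ : ℕ → ℝ) (hnn : ∀ a, 0 ≤ μ a) (hprob : ∑' a : ℕ, μ a = 1)
    (hsummean : Summable fun a : ℕ => (a : ℝ) * μ a)
    (hmean : ∑' a : ℕ, (a : ℝ) * μ a = 1 - D) :
    ∑' m : ℕ, ((m : ℝ) + 1)⁻¹ * convPow μ (m + 1) m = 1 := by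
  have hsum : Summable μ := by
    by_contra h
    rw [tsum_eq_zero_of_not_summable h] at hprob
    norm_num at hprob
  have hBnn := Bfun_nonneg μ hnn
  have hBsumm := summable_Bfun hnn hsum hprob
  set Q : ℝ := ∑' n, Bfun μ 1 n with hQdef
  have hQ0 : 0 ≤ Q := tsum_nonneg fun n => hBnn 1 n
  have hQ1 : Q ≤ 1 :=
    Summable.tsum_le_of_sum_range_le (hBsumm 1) (psum_Bfun_one_le hnn hsum hprob)
  have htsumpow : ∀ k, ∑' n, Bfun μ k n = Q ^ k := tsum_Bfun_pow hnn hsum hprob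
  -- key: Q ≥ ∑_{a < A} μ a * Q ^ a for every A
  have hstep : ∀ A : ℕ, ∑ a ∈ Finset.range A, μ a * Q ^ a ≤ Q := by
    intro A
    have hshift : Q = Bfun μ 1 0 + ∑' m, Bfun μ 1 (m + 1) := Summable.tsum_eq_zero_add (hBsumm 1)
    have hle : ∀ m, ∑ a ∈ Finset.range A, μ a * Bfun μ a m ≤ Bfun μ 1 (m + 1) := by
      intro m
      rw [Bfun_one_succ μ m]
      rcases le_or_gt A (m + 2) with h | h
      · apply Finset.sum_le_sum_of_subset_of_nonneg (Finset.range_subset_range.2 h)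
        intro a _ _
        exact mul_nonneg (hnn a) (hBnn a m)
      · refine le_of_eq ?_
        refine (Finset.sum_subset (Finset.range_subset_range.2 (by omega : m + 2 ≤ A)) ?_).symm
        intro a _ ha
        rw [Finset.mem_range, not_lt] at ha
        rw [Bfun_eq_zero μ a m (by omega), mul_zero]
    have hsummable : Summable fun m => ∑ a ∈ Finset.range A, μ a * Bfun μ a m := by
      apply summable_sum
      intro a _
      exact (hBsumm a).mul_left (μ a)
    calc ∑ a ∈ Finset.range A, μ a * Q ^ a
        = ∑ a ∈ Finset.range A, μ a * ∑' m, Bfun μ a m := by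
          refine Finset.sum_congr rfl fun a _ => ?_
          rw [htsumpow a]
      _ = ∑ a ∈ Finset.range A, ∑' m, μ a * Bfun μ a m := by
          refine Finset.sum_congr rfl fun a _ => ?_
          rw [tsum_mul_left]
      _ = ∑' m, ∑ a ∈ Finset.range A, μ a * Bfun μ a m :=
          (Summable.tsum_finsetSum fun a _ => (hBsumm a).mul_left (μ a)).symm
      _ ≤ ∑' m, Bfun μ 1 (m + 1) := Summable.tsum_le_tsum hle hsummable ((hBsumm 1).comp_injective
            (add_left_injective 1))
      _ ≤ Q := by
          rw [hshift, Bfun_zero, if_neg one_ne_zero, zero_add]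
  -- summability of a ↦ μ a * Q ^ a
  have hsummQ : Summable fun a => μ a * Q ^ a := by
    apply Summable.of_nonneg_of_le (fun a => mul_nonneg (hnn a) (pow_nonneg hQ0 a))
      (fun a => ?_) hsum
    calc μ a * Q ^ a ≤ μ a * 1 :=
        mul_le_mul_of_nonneg_left (pow_le_one₀ hQ0 hQ1) (hnn a)
      _ = μ a := mul_one _
  have hphi_le : ∑' a, μ a * Q ^ a ≤ Q :=
    Summable.tsum_le_of_sum_range_le hsummQ hstep
  -- Bernoulli lower bound : μ a * Q ^ a ≥ μ a - (1 - Q) * (a * μ a)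
  have hbern : ∀ a : ℕ, μ a - (1 - Q) * ((a : ℝ) * μ a) ≤ μ a * Q ^ a := by
    intro a
    have h1 : (1 : ℝ) + (a : ℝ) * (Q - 1) ≤ Q ^ a := by
      have := one_add_mul_le_pow (by linarith : (-2 : ℝ) ≤ Q - 1) a
      simpa using this
    have h2 : μ a * (1 + (a : ℝ) * (Q - 1)) ≤ μ a * Q ^ a :=
      mul_le_mul_of_nonneg_left h1 (hnn a)
    nlinarith [hnn a]
  have hlow : 1 - (1 - Q) * (1 - D) ≤ ∑' a, μ a * Q ^ a := by
    have hs2 : Summable fun a : ℕ => μ a - (1 - Q) * ((a : ℝ) * μ a) :=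
      hsum.sub (hsummean.mul_left (1 - Q))
    have := Summable.tsum_le_tsum hbern hs2 hsummQ
    rwa [Summable.tsum_sub hsum (hsummean.mul_left (1 - Q)), tsum_mul_left, hprob, hmean] at this
  have hQeq : Q = 1 := by nlinarith
  -- convert target to Q
  have hconv : ∀ m : ℕ, ((m : ℝ) + 1)⁻¹ * convPow μ (m + 1) m = Bfun μ 1 (m + 1) := by
    intro m
    have hd := Bfun_dwass μ (m + 1) 1 le_rfl (by omega)
    rw [Nat.add_sub_cancel] at hd
    push_cast at hd
    have hm0 : ((m : ℝ) + 1) ≠ 0 := by positivity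
    field_simp
    linarith [hd]
  calc ∑' m : ℕ, ((m : ℝ) + 1)⁻¹ * convPow μ (m + 1) m
      = ∑' m, Bfun μ 1 (m + 1) := tsum_congr hconv
    _ = Q := by
        have hshift : Q = Bfun μ 1 0 + ∑' m, Bfun μ 1 (m + 1) := Summable.tsum_eq_zero_add (hBsumm 1)
        rw [hshift, Bfun_zero, if_neg one_ne_zero, zero_add]
    _ = 1 := hQeq
end

section
/- If μ is a probability measure on ℕ with mean 1 - D < 1 (D > 0), then Σ_{m≥1} μ^{*m}(m-1) = 1/D; equivalently, the probability measure m ↦ m^{-1}·μ^{*m}(m-1) on ℕ* has mean 1/D. -/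
open scoped ENNReal BigOperators
open Filter Topology

namespace GW

noncomputable section
open Classical

/-- weight of a finite sequence -/
def w (ν : ℕ → ℝ≥0∞) {n : ℕ} (f : Fin n → ℕ) : ℝ≥0∞ := ∏ i, ν (f i)

/-- partial sum of first `t` values -/
def S {n : ℕ} (f : Fin n → ℕ) (t : ℕ) : ℕ := ∑ i : Fin n, if (i : ℕ) < t then f i else 0

/-- walk stays nonnegative through time `K` -/
def StayTo {n : ℕ} (f : Fin n → ℕ) (K : ℕ) : Prop := ∀ t ≤ K, t ≤ S f t

def Stay {n : ℕ} (f : Fin n → ℕ) : Prop := StayTo f n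

/-- first passage to `-1` exactly at time `n` -/
def FP {n : ℕ} (f : Fin n → ℕ) : Prop := (∀ t < n, t ≤ S f t) ∧ S f n + 1 = n

variable (ν : ℕ → ℝ≥0∞)

/-- indicator -/
def I (P : Prop) : ℝ≥0∞ := if P then 1 else 0

lemma I_true {P : Prop} (h : P) : I P = 1 := if_pos h
lemma I_false {P : Prop} (h : ¬ P) : I P = 0 := if_neg h
lemma I_le_one (P : Prop) : I P ≤ 1 := by by_cases h : P <;> simp [I, h]
lemma I_mono {P Q : Prop} (h : P → Q) : I P ≤ I Q := by
  by_cases hP : P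
  · rw [I_true hP, I_true (h hP)]
  · simp [I_false hP]

def q (J : ℕ) : ℝ≥0∞ := ∑' f : Fin J → ℕ, I (Stay f) * w ν f
def p (m : ℕ) : ℝ≥0∞ := ∑' f : Fin m → ℕ, I (FP f) * w ν f
def e (J : ℕ) : ℝ≥0∞ := ∑' f : Fin J → ℕ, I (Stay f) * w ν f * (S f J - J : ℕ)

def convE (f g : ℕ → ℝ≥0∞) (n : ℕ) : ℝ≥0∞ := ∑ k ∈ Finset.range (n + 1), f k * g (n - k)

def cp (f : ℕ → ℝ≥0∞) : ℕ → ℕ → ℝ≥0∞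
  | 0, n => if n = 0 then 1 else 0
  | m + 1, n => convE f (cp f m) n

/-! ### infrastructure -/

def snocEquiv (n : ℕ) : ((Fin n → ℕ) × ℕ) ≃ (Fin (n + 1) → ℕ) where
  toFun p := Fin.snoc p.1 p.2
  invFun f := (Fin.init f, f (Fin.last n))
  left_inv := by rintro ⟨g, x⟩; simp [Fin.init_snoc]
  right_inv := fun f => Fin.snoc_init_self f

lemma tsum_snoc {n : ℕ} (φ : (Fin (n + 1) → ℕ) → ℝ≥0∞) :
    ∑' f, φ f = ∑' (g : Fin n → ℕ) (x : ℕ), φ (Fin.snoc g x) := by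
  rw [← (snocEquiv n).tsum_eq φ]
  exact ENNReal.tsum_prod'

lemma tsum_cons {n : ℕ} (φ : (Fin (n + 1) → ℕ) → ℝ≥0∞) :
    ∑' f, φ f = ∑' (x : ℕ) (g : Fin n → ℕ), φ (Fin.cons x g) := by
  rw [← (Fin.consEquiv (fun _ : Fin (n+1) => ℕ)).tsum_eq φ]
  exact ENNReal.tsum_prod'

lemma w_snoc {n : ℕ} (g : Fin n → ℕ) (x : ℕ) :
    w ν (Fin.snoc g x) = w ν g * ν x := by
  simp [w, Fin.prod_univ_castSucc]

lemma w_cons {n : ℕ} (g : Fin n → ℕ) (x : ℕ) :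
    w ν (Fin.cons x g) = ν x * w ν g := by
  simp [w, Fin.prod_univ_succ]

lemma tsum_w (h1 : ∑' k, ν k = 1) : ∀ n : ℕ, (∑' f : Fin n → ℕ, w ν f) = 1 := by
  intro n
  induction n with
  | zero =>
      rw [tsum_eq_single (fun i => 0) (by intro b hb; exact absurd (Subsingleton.elim b _) hb)]
      simp [w]
  | succ n ih =>
      rw [tsum_snoc]
      simp only [w_snoc, ENNReal.tsum_mul_left, h1, mul_one]
      exact ih

lemma S_of_ge {n : ℕ} (f : Fin n → ℕ) {t : ℕ} (h : n ≤ t) : S f t = ∑ i, f i := by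
  unfold S
  apply Finset.sum_congr rfl
  intro i _
  simp [lt_of_lt_of_le i.isLt h]

lemma S_top {n : ℕ} (f : Fin n → ℕ) : S f n = ∑ i, f i := S_of_ge f le_rfl

lemma S_snoc {n : ℕ} (g : Fin n → ℕ) (x t : ℕ) (h : t ≤ n) :
    S (Fin.snoc g x) t = S g t := by
  unfold S
  rw [Fin.sum_univ_castSucc]
  simp [Fin.snoc_castSucc, Fin.snoc_last, Nat.not_lt.2 h]

lemma S_snoc_succ {n : ℕ} (g : Fin n → ℕ) (x : ℕ) :
    S (Fin.snoc g x) (n + 1) = S g n + x := by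
  unfold S
  rw [Fin.sum_univ_castSucc]
  simp [Fin.snoc_castSucc, Fin.snoc_last, Fin.is_lt, Nat.lt_succ_of_lt]

lemma stay_snoc {n : ℕ} (g : Fin n → ℕ) (x : ℕ) :
    Stay (Fin.snoc g x) ↔ Stay g ∧ n + 1 ≤ S g n + x := by
  constructor
  · intro h
    refine ⟨fun t ht => ?_, ?_⟩
    · have := h t (le_trans ht (Nat.le_succ n))
      rwa [S_snoc g x t ht] at this
    · have := h (n+1) le_rfl
      rwa [S_snoc_succ] at this
  · rintro ⟨h1, h2⟩ t ht
    by_cases h : t ≤ n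
    · rw [S_snoc g x t h]; exact h1 t h
    · have ht' : t = n + 1 := by omega
      subst ht'; rwa [S_snoc_succ]

lemma fp_snoc {n : ℕ} (g : Fin n → ℕ) (x : ℕ) :
    FP (Fin.snoc g x) ↔ Stay g ∧ S g n + x = n := by
  unfold FP
  constructor
  · rintro ⟨h1, h2⟩
    rw [S_snoc_succ] at h2
    refine ⟨fun t ht => ?_, by omega⟩
    have := h1 t (Nat.lt_succ_of_le ht)
    rwa [S_snoc g x t ht] at this
  · rintro ⟨h1, h2⟩
    refine ⟨fun t ht => ?_, ?_⟩
    · rw [S_snoc g x t (Nat.lt_succ_iff.mp ht)]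
      exact h1 t (Nat.lt_succ_iff.mp ht)
    · rw [S_snoc_succ]; omega

lemma stay_of_stay_snoc {n : ℕ} {g : Fin n → ℕ} {x : ℕ} (h : Stay (Fin.snoc g x)) :
    Stay g := ((stay_snoc g x).mp h).1

/-- key pointwise splitting: a staying path extended by one step either stays or has
first passage -/
lemma I_split {n : ℕ} (g : Fin n → ℕ) (x : ℕ) :
    I (Stay g) = I (Stay (Fin.snoc g x)) + I (FP (Fin.snoc g x)) := by
  by_cases hg : Stay g
  · have hS : n ≤ S g n := hg n le_rfl
    rcases Nat.lt_or_ge (S g n + x) (n+1) with h | h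
    · have hfp : FP (Fin.snoc g x) := (fp_snoc g x).mpr ⟨hg, by omega⟩
      have hst : ¬ Stay (Fin.snoc g x) := by
        rw [stay_snoc]; omega
      rw [I_true hg, I_true hfp, I_false hst, zero_add]
    · have hst : Stay (Fin.snoc g x) := (stay_snoc g x).mpr ⟨hg, h⟩
      have hfp : ¬ FP (Fin.snoc g x) := by
        rw [fp_snoc]; omega
      rw [I_true hg, I_true hst, I_false hfp, add_zero]
  · have h1 : ¬ Stay (Fin.snoc g x) := fun h => hg (stay_of_stay_snoc h)
    have h2 : ¬ FP (Fin.snoc g x) := fun h => hg ((fp_snoc g x).mp h).1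
    rw [I_false hg, I_false h1, I_false h2, add_zero]

/-- the fundamental one-step recursion: `q J = q (J+1) + p (J+1)` -/
lemma q_succ (h1 : ∑' k, ν k = 1) (J : ℕ) : q ν J = q ν (J + 1) + p ν (J + 1) := by
  unfold q p
  rw [← ENNReal.tsum_add]
  rw [tsum_snoc (fun f => I (Stay f) * w ν f + I (FP f) * w ν f)]
  congr 1
  ext g
  simp only [w_snoc, ← add_mul, ← I_split]
  simp only [← mul_assoc]
  rw [ENNReal.tsum_mul_left, h1, mul_one]

/-- the energy recursion: `e J + c * q J = e (J+1) + q (J+1)` -/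
lemma e_succ (h1 : ∑' k, ν k = 1) (c : ℝ≥0∞) (hc : ∑' k : ℕ, (k : ℝ≥0∞) * ν k = c) (J : ℕ) :
    e ν J + c * q ν J = e ν (J + 1) + q ν (J + 1) := by
  have key : ∀ (g : Fin J → ℕ) (x : ℕ),
      I (Stay (Fin.snoc g x)) * w ν (Fin.snoc g x)
          * ((S (Fin.snoc g x) (J+1) - (J+1) : ℕ) : ℝ≥0∞)
        + I (Stay (Fin.snoc g x)) * w ν (Fin.snoc g x)
      = I (Stay g) * w ν g * (ν x * (((S g J - J : ℕ) : ℝ≥0∞) + (x : ℝ≥0∞))) := by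
    intro g x
    by_cases hg : Stay g
    · have hS : J ≤ S g J := hg J le_rfl
      by_cases hx : J + 1 ≤ S g J + x
      · have hst : Stay (Fin.snoc g x) := (stay_snoc g x).mpr ⟨hg, hx⟩
        rw [I_true hst, I_true hg, w_snoc, S_snoc_succ, one_mul, one_mul]
        have harith : ((S g J + x - (J+1) : ℕ) : ℝ≥0∞) + 1
            = ((S g J - J : ℕ) : ℝ≥0∞) + (x : ℝ≥0∞) := by
          have h2 : (S g J + x - (J+1)) + 1 = (S g J - J) + x := by omega
          exact_mod_cast congrArg (fun n : ℕ => (n : ℝ≥0∞)) h2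
        calc w ν g * ν x * ((S g J + x - (J+1) : ℕ) : ℝ≥0∞) + w ν g * ν x
            = w ν g * ν x * (((S g J + x - (J+1) : ℕ) : ℝ≥0∞) + 1) := by ring
          _ = w ν g * ν x * (((S g J - J : ℕ) : ℝ≥0∞) + (x : ℝ≥0∞)) := by rw [harith]
          _ = w ν g * (ν x * (((S g J - J : ℕ) : ℝ≥0∞) + (x : ℝ≥0∞))) := by ring
      · have hst : ¬ Stay (Fin.snoc g x) := by rw [stay_snoc]; omega
        have hx0 : x = 0 := by omega
        have hS0 : S g J - J = 0 := by omega
        rw [I_false hst, I_true hg, hx0, hS0]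
        simp
    · have hst : ¬ Stay (Fin.snoc g x) := fun h => hg (stay_of_stay_snoc h)
      rw [I_false hst, I_false hg]
      simp
  calc e ν J + c * q ν J
      = ∑' g : Fin J → ℕ, (I (Stay g) * w ν g * (((S g J - J : ℕ) : ℝ≥0∞) + c)) := by
        unfold e q
        rw [← ENNReal.tsum_mul_left (a := c), ← ENNReal.tsum_add]
        exact tsum_congr fun g => by ring
    _ = ∑' (g : Fin J → ℕ) (x : ℕ),
          I (Stay g) * w ν g * (ν x * (((S g J - J : ℕ) : ℝ≥0∞) + (x : ℝ≥0∞))) := by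
        refine tsum_congr fun g => ?_
        rw [ENNReal.tsum_mul_left]
        congr 1
        calc ((S g J - J : ℕ) : ℝ≥0∞) + c
            = ∑' x : ℕ, (ν x * ((S g J - J : ℕ) : ℝ≥0∞) + (x : ℝ≥0∞) * ν x) := by
              rw [ENNReal.tsum_add, ENNReal.tsum_mul_right, h1, one_mul, hc]
          _ = ∑' x : ℕ, ν x * (((S g J - J : ℕ) : ℝ≥0∞) + (x : ℝ≥0∞)) := by
              exact tsum_congr fun x => by ring
    _ = ∑' f : Fin (J+1) → ℕ,
          (I (Stay f) * w ν f * ((S f (J+1) - (J+1) : ℕ) : ℝ≥0∞) + I (Stay f) * w ν f) := by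
        rw [tsum_snoc (fun f => I (Stay f) * w ν f * ((S f (J+1) - (J+1) : ℕ) : ℝ≥0∞)
          + I (Stay f) * w ν f)]
        exact tsum_congr fun g => tsum_congr fun x => (key g x).symm
    _ = e ν (J + 1) + q ν (J + 1) := by
        unfold e q
        rw [ENNReal.tsum_add]

lemma q_zero : q ν 0 = 1 := by
  unfold q
  rw [tsum_eq_single (fun i => 0) (by intro b hb; exact absurd (Subsingleton.elim b _) hb)]
  have hst : Stay (fun _ : Fin 0 => 0) := by
    intro t ht
    interval_cases t
    simp [S]
  rw [I_true hst]
  simp [w]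

lemma e_zero : e ν 0 = 0 := by
  unfold e
  convert tsum_zero with f
  simp [S]

lemma telescope (h1 : ∑' k, ν k = 1) (c d : ℝ≥0∞) (hcd : c + d = 1)
    (hc : ∑' k : ℕ, (k : ℝ≥0∞) * ν k = c) :
    ∀ J : ℕ, (e ν J + q ν J) + d * ∑ j ∈ Finset.range J, q ν j = 1 := by
  intro J
  induction J with
  | zero => simp [e_zero, q_zero]
  | succ J ih =>
      rw [Finset.sum_range_succ, mul_add, ← e_succ ν h1 c hc J]
      calc e ν J + c * q ν J + (d * ∑ j ∈ Finset.range J, q ν j + d * q ν J)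
          = (e ν J + (c + d) * q ν J) + d * ∑ j ∈ Finset.range J, q ν j := by ring
        _ = (e ν J + q ν J) + d * ∑ j ∈ Finset.range J, q ν j := by rw [hcd, one_mul]
        _ = 1 := ih

lemma restrict_full {K : ℕ} (f : Fin K → ℕ) (h : K ≤ K) :
    (fun i => f (Fin.castLE h i)) = f := by
  funext i
  rfl

/-- cylinder lemma: a function of the first `K` coordinates integrates out -/
lemma tsum_cyl (h1 : ∑' k, ν k = 1) {K : ℕ} (φ : (Fin K → ℕ) → ℝ≥0∞) :
    ∀ (J : ℕ) (h : K ≤ J),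
      ∑' f : Fin J → ℕ, w ν f * φ (fun i => f (Fin.castLE h i))
        = ∑' g : Fin K → ℕ, w ν g * φ g := by
  intro J
  induction J with
  | zero =>
      intro h
      have hK : K = 0 := Nat.le_zero.mp h
      subst hK
      exact tsum_congr fun f => by rw [restrict_full]
  | succ J ih =>
      intro h
      by_cases hK : K = J + 1
      · subst hK
        exact tsum_congr fun f => by rw [restrict_full]
      · have h' : K ≤ J := by omega
        rw [tsum_snoc (fun f => w ν f * φ (fun i => f (Fin.castLE h i)))]
        have key : ∀ (g : Fin J → ℕ) (x : ℕ),
            w ν (Fin.snoc g x) * φ (fun i => Fin.snoc (α := fun _ : Fin (J+1) => ℕ) g x (Fin.castLE h i))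
              = (w ν g * φ (fun i => g (Fin.castLE h' i))) * ν x := by
          intro g x
          rw [w_snoc]
          have harg : (fun i => Fin.snoc (α := fun _ : Fin (J+1) => ℕ) g x (Fin.castLE h i))
              = (fun i => g (Fin.castLE h' i)) := by
            funext i
            have hi : Fin.castLE h i = Fin.castSucc (Fin.castLE h' i) := Fin.ext (by simp)
            rw [hi, Fin.snoc_castSucc]
          rw [harg]; ring
        simp only [key, ENNReal.tsum_mul_left, h1, mul_one]
        exact ih h'

/-- expectation of a single coordinate -/
lemma tsum_coord (h1 : ∑' k, ν k = 1) (c : ℝ≥0∞) (hc : ∑' k : ℕ, (k : ℝ≥0∞) * ν k = c) :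
    ∀ (J : ℕ) (i : Fin J), ∑' f : Fin J → ℕ, w ν f * (f i : ℝ≥0∞) = c := by
  intro J
  induction J with
  | zero => exact fun i => i.elim0
  | succ J ih =>
      intro i
      rw [tsum_snoc (fun f => w ν f * (f i : ℝ≥0∞))]
      induction i using Fin.lastCases with
      | last =>
          simp only [w_snoc, Fin.snoc_last]
          have hxc : ∑' x : ℕ, ν x * (x : ℝ≥0∞) = c := by
            rw [← hc]; exact tsum_congr fun x => mul_comm _ _
          calc ∑' (g : Fin J → ℕ) (x : ℕ), w ν g * ν x * (x : ℝ≥0∞)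
              = ∑' (g : Fin J → ℕ), w ν g * ∑' x : ℕ, ν x * (x : ℝ≥0∞) := by
                refine tsum_congr fun g => ?_
                rw [← ENNReal.tsum_mul_left]
                exact tsum_congr fun x => by ring
            _ = ∑' (g : Fin J → ℕ), w ν g * c := by rw [hxc]
            _ = c := by rw [ENNReal.tsum_mul_right, tsum_w ν h1, one_mul]
      | cast i =>
          simp only [w_snoc, Fin.snoc_castSucc]
          calc ∑' (g : Fin J → ℕ) (x : ℕ), w ν g * ν x * ((g i : ℕ) : ℝ≥0∞)
              = ∑' (g : Fin J → ℕ), (w ν g * (g i : ℝ≥0∞)) * ∑' x, ν x := by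
                refine tsum_congr fun g => ?_
                rw [← ENNReal.tsum_mul_left]
                exact tsum_congr fun x => by ring
            _ = c := by
                simp only [h1, mul_one]
                exact ih i

/-- expectation of the total sum -/
lemma tsum_wS (h1 : ∑' k, ν k = 1) (c : ℝ≥0∞) (hc : ∑' k : ℕ, (k : ℝ≥0∞) * ν k = c)
    (J : ℕ) : ∑' f : Fin J → ℕ, w ν f * (S f J : ℝ≥0∞) = (J : ℝ≥0∞) * c := by
  have h : ∀ f : Fin J → ℕ, w ν f * (S f J : ℝ≥0∞) = ∑ i : Fin J, w ν f * (f i : ℝ≥0∞) := by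
    intro f
    rw [S_top, Nat.cast_sum, Finset.mul_sum]
  calc ∑' f : Fin J → ℕ, w ν f * (S f J : ℝ≥0∞)
      = ∑' f : Fin J → ℕ, ∑ i : Fin J, w ν f * (f i : ℝ≥0∞) := tsum_congr h
    _ = ∑ i : Fin J, ∑' f : Fin J → ℕ, w ν f * (f i : ℝ≥0∞) := by
        exact Summable.tsum_finsetSum fun i _ => ENNReal.summable
    _ = ∑ i : Fin J, c := by
        exact Finset.sum_congr rfl fun i _ => tsum_coord ν h1 c hc J i
    _ = (J : ℝ≥0∞) * c := by simp [mul_comm]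

lemma I_congr {P Q : Prop} (h : P ↔ Q) : I P = I Q := by
  by_cases hP : P
  · rw [I_true hP, I_true (h.mp hP)]
  · rw [I_false hP, I_false (fun hQ => hP (h.mpr hQ))]

lemma S_zero {n : ℕ} (f : Fin n → ℕ) : S f 0 = 0 := by simp [S]

lemma S_succ {n : ℕ} (f : Fin n → ℕ) {t : ℕ} (ht : t < n) :
    S f (t + 1) = S f t + f ⟨t, ht⟩ := by
  unfold S
  have key : ∀ i : Fin n, (if (i : ℕ) < t + 1 then f i else 0)
      = (if (i : ℕ) < t then f i else 0) + (if i = ⟨t, ht⟩ then f i else 0) := by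
    intro i
    by_cases h2 : i = ⟨t, ht⟩
    · subst h2
      simp
    · have h2' : ¬ ((i : ℕ) = t) := fun hh => h2 (Fin.ext hh)
      have h3 : ((i : ℕ) < t + 1) ↔ ((i : ℕ) < t) := by omega
      simp [h2, h3]
  rw [Finset.sum_congr rfl (fun i _ => key i), Finset.sum_add_distrib,
    Finset.sum_ite_eq' Finset.univ]
  simp

lemma S_restrict {J K : ℕ} (h : K ≤ J) (f : Fin J → ℕ) :
    ∀ t ≤ K, S (fun i : Fin K => f (Fin.castLE h i)) t = S f t := by
  intro t
  induction t with
  | zero => intro _; rw [S_zero, S_zero]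
  | succ t ih =>
      intro ht
      have ht' : t < K := ht
      rw [S_succ _ ht', S_succ f (lt_of_lt_of_le ht' h), ih (le_of_lt ht')]
      rfl

lemma stayTo_restrict {J K : ℕ} (h : K ≤ J) (f : Fin J → ℕ) {K' : ℕ} (hK' : K' ≤ K) :
    StayTo (fun i : Fin K => f (Fin.castLE h i)) K' ↔ StayTo f K' := by
  unfold StayTo
  constructor
  · intro hs t ht
    have := hs t ht
    rwa [S_restrict h f t (le_trans ht hK')] at this
  · intro hs t ht
    rw [S_restrict h f t (le_trans ht hK')]
    exact hs t ht

lemma stayTo_snoc {n : ℕ} (g : Fin n → ℕ) (x : ℕ) {K : ℕ} (hK : K ≤ n) :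
    StayTo (Fin.snoc g x) K ↔ StayTo g K := by
  unfold StayTo
  constructor
  · intro hs t ht
    have := hs t ht
    rwa [S_snoc g x t (le_trans ht hK)] at this
  · intro hs t ht
    rw [S_snoc g x t (le_trans ht hK)]
    exact hs t ht

lemma stay_mono_stayTo {n : ℕ} (f : Fin n → ℕ) {K : ℕ} (hK : K ≤ n) (h : Stay f) :
    StayTo f K := fun t ht => h t (le_trans ht hK)

/-- expectation of coordinate `K` on the staying event -/
lemma E2 (h1 : ∑' k, ν k = 1) (c : ℝ≥0∞) (hc : ∑' k : ℕ, (k : ℝ≥0∞) * ν k = c)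
    {J K : ℕ} (hK : K < J) :
    ∑' f : Fin J → ℕ, I (Stay f) * w ν f * ((f ⟨K, hK⟩ : ℕ) : ℝ≥0∞) ≤ c * q ν K := by
  have hc' : ∑' x : ℕ, ν x * ((x : ℕ) : ℝ≥0∞) = c := by
    rw [← hc]; exact tsum_congr fun x => mul_comm _ _
  have hK1 : K + 1 ≤ J := hK
  have step1 : ∑' f : Fin J → ℕ, I (Stay f) * w ν f * ((f ⟨K, hK⟩ : ℕ) : ℝ≥0∞)
      ≤ ∑' f : Fin J → ℕ, w ν f * (I (StayTo f K) * ((f ⟨K, hK⟩ : ℕ) : ℝ≥0∞)) := by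
    refine ENNReal.tsum_le_tsum fun f => ?_
    have : I (Stay f) ≤ I (StayTo f K) := I_mono (stay_mono_stayTo f (le_of_lt hK))
    calc I (Stay f) * w ν f * ((f ⟨K, hK⟩ : ℕ) : ℝ≥0∞)
        ≤ I (StayTo f K) * w ν f * ((f ⟨K, hK⟩ : ℕ) : ℝ≥0∞) := by
          exact mul_le_mul' (mul_le_mul' this le_rfl) le_rfl
      _ = w ν f * (I (StayTo f K) * ((f ⟨K, hK⟩ : ℕ) : ℝ≥0∞)) := by ring
  have step2 : ∑' f : Fin J → ℕ, w ν f * (I (StayTo f K) * ((f ⟨K, hK⟩ : ℕ) : ℝ≥0∞))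
      = ∑' g : Fin (K+1) → ℕ, w ν g * (I (StayTo g K) * ((g (Fin.last K) : ℕ) : ℝ≥0∞)) := by
    rw [← tsum_cyl ν h1 (fun g : Fin (K+1) → ℕ =>
      I (StayTo g K) * ((g (Fin.last K) : ℕ) : ℝ≥0∞)) J hK1]
    refine tsum_congr fun f => ?_
    congr 1
    have h1' : I (StayTo f K) = I (StayTo (fun i : Fin (K+1) => f (Fin.castLE hK1 i)) K) :=
      (I_congr (stayTo_restrict hK1 f (Nat.le_succ K))).symm
    rw [h1']
    rfl
  have step3 : ∑' g : Fin (K+1) → ℕ, w ν g * (I (StayTo g K) * ((g (Fin.last K) : ℕ) : ℝ≥0∞))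
      = c * q ν K := by
    rw [tsum_snoc (fun g : Fin (K+1) → ℕ =>
      w ν g * (I (StayTo g K) * ((g (Fin.last K) : ℕ) : ℝ≥0∞)))]
    have key : ∀ (g : Fin K → ℕ) (x : ℕ),
        w ν (Fin.snoc g x) * (I (StayTo (Fin.snoc g x : Fin (K+1) → ℕ) K)
            * (((Fin.snoc g x : Fin (K+1) → ℕ) (Fin.last K) : ℕ) : ℝ≥0∞))
        = (I (Stay g) * w ν g) * (ν x * ((x : ℕ) : ℝ≥0∞)) := by
      intro g x
      rw [w_snoc, Fin.snoc_last, I_congr (stayTo_snoc g x (le_refl K)),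
        show I (StayTo g K) = I (Stay g) from rfl]
      ring
    simp only [key]
    calc ∑' (g : Fin K → ℕ) (x : ℕ), (I (Stay g) * w ν g) * (ν x * ((x : ℕ) : ℝ≥0∞))
        = ∑' g : Fin K → ℕ, (I (Stay g) * w ν g) * c := by
          refine tsum_congr fun g => ?_
          rw [ENNReal.tsum_mul_left, hc']
      _ = c * q ν K := by rw [ENNReal.tsum_mul_right, mul_comm]; rfl
  calc ∑' f : Fin J → ℕ, I (Stay f) * w ν f * ((f ⟨K, hK⟩ : ℕ) : ℝ≥0∞)
      ≤ _ := step1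
    _ = _ := step2
    _ = c * q ν K := step3

/-- truncated second piece -/
def AKM (K M : ℕ) : ℝ≥0∞ :=
  ∑' g : Fin K → ℕ, w ν g * ((S g K : ℝ≥0∞) * I (M ≤ S g K))

lemma tsum_indicator_small {ι : Type*} (F : ι → ℝ≥0∞) (G : ι → ℕ) (hF : ∑' x, F x ≠ ⊤)
    {ε : ℝ≥0∞} (hε : 0 < ε) : ∃ M : ℕ, ∑' x, F x * I (M ≤ G x) ≤ ε := by
  have hev : ∀ᶠ s : Finset ι in Filter.atTop, (∑' x : {x // x ∉ s}, F x) < ε :=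
    (ENNReal.tendsto_tsum_compl_atTop_zero hF).eventually_lt_const hε
  obtain ⟨s, hs⟩ := hev.exists
  refine ⟨s.sup G + 1, ?_⟩
  have hpt : ∀ x : ι, F x * I (s.sup G + 1 ≤ G x) ≤ Set.indicator {x | x ∉ s} F x := by
    intro x
    by_cases hx : x ∈ s
    · have hG : ¬ (s.sup G + 1 ≤ G x) := by
        have := Finset.le_sup (f := G) hx
        omega
      rw [I_false hG, mul_zero]
      exact zero_le
    · rw [Set.indicator_of_mem (by exact hx)]
      calc F x * I _ ≤ F x * 1 := mul_le_mul' le_rfl (I_le_one _)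
        _ = F x := mul_one _
  calc ∑' x, F x * I (s.sup G + 1 ≤ G x)
      ≤ ∑' x, Set.indicator {x | x ∉ s} F x := ENNReal.tsum_le_tsum hpt
    _ = ∑' x : {x // x ∉ s}, F x := (tsum_subtype _ F).symm
    _ ≤ ε := le_of_lt hs

lemma AKM_small (h1 : ∑' k, ν k = 1) (c : ℝ≥0∞) (hc : ∑' k : ℕ, (k : ℝ≥0∞) * ν k = c)
    (hcT : c ≠ ⊤) (K : ℕ) {ε : ℝ≥0∞} (hε : 0 < ε) : ∃ M : ℕ, AKM ν K M ≤ ε := by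
  have hfin : ∑' g : Fin K → ℕ, w ν g * ((S g K : ℕ) : ℝ≥0∞) ≠ ⊤ := by
    rw [tsum_wS ν h1 c hc K]
    exact ENNReal.mul_ne_top (ENNReal.natCast_ne_top K) hcT
  obtain ⟨M, hM⟩ := tsum_indicator_small (fun g : Fin K → ℕ => w ν g * ((S g K : ℕ) : ℝ≥0∞))
    (fun g => S g K) hfin hε
  refine ⟨M, ?_⟩
  unfold AKM
  calc ∑' g : Fin K → ℕ, w ν g * (((S g K : ℕ) : ℝ≥0∞) * I (M ≤ S g K))
      = ∑' g : Fin K → ℕ, (w ν g * ((S g K : ℕ) : ℝ≥0∞)) * I (M ≤ S g K) := by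
        exact tsum_congr fun g => by ring
    _ ≤ ε := hM

/-- the key bound on the boundary term -/
lemma e_bound (h1 : ∑' k, ν k = 1) (c : ℝ≥0∞) (hc : ∑' k : ℕ, (k : ℝ≥0∞) * ν k = c)
    {K J : ℕ} (hKJ : K ≤ J) (M : ℕ) :
    e ν J ≤ AKM ν K M + (M : ℝ≥0∞) * q ν J + c * ∑' j : ℕ, q ν (K + j) := by
  set T : Finset (Fin J) := Finset.univ.filter (fun i : Fin J => K ≤ (i : ℕ)) with hT
  have hsplit : ∀ f : Fin J → ℕ, S f J = S f K + ∑ i ∈ T, f i := by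
    intro f
    have key : ∀ i : Fin J, f i = (if (i : ℕ) < K then f i else 0)
        + (if K ≤ (i : ℕ) then f i else 0) := by
      intro i
      by_cases h : (i : ℕ) < K
      · simp [h, (by omega : ¬ K ≤ (i : ℕ))]
      · simp [h, Nat.le_of_not_lt h]
    rw [S_top, Finset.sum_congr rfl (fun i _ => key i), Finset.sum_add_distrib]
    congr 1
    rw [hT, Finset.sum_filter]
  have hpt : ∀ f : Fin J → ℕ, I (Stay f) * w ν f * ((S f J - J : ℕ) : ℝ≥0∞)
      ≤ w ν f * (((S f K : ℕ) : ℝ≥0∞) * I (M ≤ S f K))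
        + (M : ℝ≥0∞) * (I (Stay f) * w ν f)
        + ∑ i ∈ T, I (Stay f) * w ν f * ((f i : ℕ) : ℝ≥0∞) := by
    intro f
    by_cases hst : Stay f
    · simp only [I_true hst, one_mul]
      have hNat : (S f J - J : ℕ) ≤ S f K + ∑ i ∈ T, f i := by
        have := hsplit f
        omega
      have hcast : ((S f J - J : ℕ) : ℝ≥0∞)
          ≤ ((S f K : ℕ) : ℝ≥0∞) + ∑ i ∈ T, ((f i : ℕ) : ℝ≥0∞) := by
        calc ((S f J - J : ℕ) : ℝ≥0∞) ≤ ((S f K + ∑ i ∈ T, f i : ℕ) : ℝ≥0∞) :=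
              Nat.cast_le.mpr hNat
          _ = ((S f K : ℕ) : ℝ≥0∞) + ∑ i ∈ T, ((f i : ℕ) : ℝ≥0∞) := by
              rw [Nat.cast_add, Nat.cast_sum]
      have hM : ((S f K : ℕ) : ℝ≥0∞) ≤ ((S f K : ℕ) : ℝ≥0∞) * I (M ≤ S f K) + (M : ℝ≥0∞) := by
        by_cases hm : M ≤ S f K
        · rw [I_true hm, mul_one]
          exact le_self_add
        · calc ((S f K : ℕ) : ℝ≥0∞) ≤ (M : ℝ≥0∞) := Nat.cast_le.mpr (by omega)
            _ ≤ _ := le_add_self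
      calc w ν f * ((S f J - J : ℕ) : ℝ≥0∞)
          ≤ w ν f * (((S f K : ℕ) : ℝ≥0∞) + ∑ i ∈ T, ((f i : ℕ) : ℝ≥0∞)) :=
            mul_le_mul' le_rfl hcast
        _ ≤ w ν f * ((((S f K : ℕ) : ℝ≥0∞) * I (M ≤ S f K) + (M : ℝ≥0∞))
              + ∑ i ∈ T, ((f i : ℕ) : ℝ≥0∞)) :=
            mul_le_mul' le_rfl (add_le_add_left hM _)
        _ = w ν f * (((S f K : ℕ) : ℝ≥0∞) * I (M ≤ S f K)) + (M : ℝ≥0∞) * w ν f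
              + ∑ i ∈ T, w ν f * ((f i : ℕ) : ℝ≥0∞) := by
            rw [mul_add, mul_add, Finset.mul_sum, mul_comm (w ν f) (M : ℝ≥0∞)]
    · rw [I_false hst]
      simp only [zero_mul, mul_zero]
      exact zero_le
  have hsum : e ν J ≤ (∑' f : Fin J → ℕ, w ν f * (((S f K : ℕ) : ℝ≥0∞) * I (M ≤ S f K)))
      + (∑' f : Fin J → ℕ, (M : ℝ≥0∞) * (I (Stay f) * w ν f))
      + (∑' f : Fin J → ℕ, ∑ i ∈ T, I (Stay f) * w ν f * ((f i : ℕ) : ℝ≥0∞)) := by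
    unfold e
    calc ∑' f : Fin J → ℕ, I (Stay f) * w ν f * ((S f J - J : ℕ) : ℝ≥0∞)
        ≤ ∑' f : Fin J → ℕ, (w ν f * (((S f K : ℕ) : ℝ≥0∞) * I (M ≤ S f K))
            + (M : ℝ≥0∞) * (I (Stay f) * w ν f)
            + ∑ i ∈ T, I (Stay f) * w ν f * ((f i : ℕ) : ℝ≥0∞)) := ENNReal.tsum_le_tsum hpt
      _ = _ := by rw [ENNReal.tsum_add, ENNReal.tsum_add]
  have hterm1 : (∑' f : Fin J → ℕ, w ν f * (((S f K : ℕ) : ℝ≥0∞) * I (M ≤ S f K)))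
      = AKM ν K M := by
    unfold AKM
    rw [← tsum_cyl ν h1 (fun g : Fin K → ℕ => ((S g K : ℕ) : ℝ≥0∞) * I (M ≤ S g K)) J hKJ]
    refine tsum_congr fun f => ?_
    rw [S_restrict hKJ f K le_rfl]
  have hterm2 : (∑' f : Fin J → ℕ, (M : ℝ≥0∞) * (I (Stay f) * w ν f))
      = (M : ℝ≥0∞) * q ν J := by
    rw [ENNReal.tsum_mul_left]
    rfl
  have hterm3 : (∑' f : Fin J → ℕ, ∑ i ∈ T, I (Stay f) * w ν f * ((f i : ℕ) : ℝ≥0∞))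
      ≤ c * ∑' j : ℕ, q ν (K + j) := by
    rw [Summable.tsum_finsetSum (fun i _ => ENNReal.summable)]
    calc ∑ i ∈ T, ∑' f : Fin J → ℕ, I (Stay f) * w ν f * ((f i : ℕ) : ℝ≥0∞)
        ≤ ∑ i ∈ T, c * q ν (i : ℕ) := by
          refine Finset.sum_le_sum fun i _ => ?_
          have := E2 ν h1 c hc (J := J) (K := (i : ℕ)) i.isLt
          calc ∑' f : Fin J → ℕ, I (Stay f) * w ν f * ((f i : ℕ) : ℝ≥0∞)
              = ∑' f : Fin J → ℕ, I (Stay f) * w ν f * ((f ⟨(i : ℕ), i.isLt⟩ : ℕ) : ℝ≥0∞) := by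
                exact tsum_congr fun f => by rw [Fin.eta]
            _ ≤ c * q ν (i : ℕ) := this
      _ = c * ∑ i ∈ T, q ν (i : ℕ) := by rw [Finset.mul_sum]
      _ ≤ c * ∑' j : ℕ, q ν (K + j) := by
          refine mul_le_mul' le_rfl ?_
          have himg : ∑ i ∈ T, q ν (i : ℕ) = ∑ j ∈ T.image (fun i : Fin J => (i : ℕ) - K),
              q ν (K + j) := by
            rw [Finset.sum_image]
            · refine Finset.sum_congr rfl fun i hi => ?_
              have hKi : K ≤ (i : ℕ) := by
                rw [hT] at hi
                simpa using (Finset.mem_filter.mp hi).2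
              congr 1
              omega
            · intro a ha b hb hab
              have hKa : K ≤ (a : ℕ) := by
                rw [hT] at ha
                simpa using (Finset.mem_filter.mp ha).2
              have hKb : K ≤ (b : ℕ) := by
                rw [hT] at hb
                simpa using (Finset.mem_filter.mp hb).2
              exact Fin.ext (by simp only at hab; omega)
          rw [himg]
          exact ENNReal.sum_le_tsum _
  calc e ν J ≤ _ := hsum
    _ ≤ AKM ν K M + (M : ℝ≥0∞) * q ν J + c * ∑' j : ℕ, q ν (K + j) := by
        rw [hterm1, hterm2]
        exact add_le_add_right hterm3 _

/-! ### convolution powers as sums over tuples -/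

lemma cp_eq : ∀ m n : ℕ, cp ν m n = ∑' f : Fin m → ℕ, I (∑ i, f i = n) * w ν f := by
  intro m
  induction m with
  | zero =>
      intro n
      rw [tsum_eq_single (fun i => 0) (by intro b hb; exact absurd (Subsingleton.elim b _) hb)]
      show (if n = 0 then 1 else 0 : ℝ≥0∞) = I (∑ i : Fin 0, (0 : ℕ) = n) * w ν (fun _ => 0)
      simp [I, w, eq_comm]
  | succ m ih =>
      intro n
      have hL : cp ν (m+1) n = ∑ k ∈ Finset.range (n+1), ν k * cp ν m (n - k) := rfl
      rw [hL, tsum_cons (fun f => I (∑ i, f i = n) * w ν f)]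
      symm
      have key : ∀ x : ℕ,
          (∑' g : Fin m → ℕ, I (∑ i, (Fin.cons x g : Fin (m+1) → ℕ) i = n)
            * w ν (Fin.cons x g))
          = if x ≤ n then ν x * cp ν m (n - x) else 0 := by
        intro x
        by_cases hx : x ≤ n
        · rw [if_pos hx, ih (n - x), ← ENNReal.tsum_mul_left]
          refine tsum_congr fun g => ?_
          rw [w_cons]
          have hiff : (∑ i, (Fin.cons x g : Fin (m+1) → ℕ) i = n) ↔ (∑ i, g i = n - x) := by
            rw [Fin.sum_cons]
            omega
          rw [I_congr hiff]
          ring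
        · rw [if_neg hx]
          convert tsum_zero with g
          have hno : ¬ (∑ i, (Fin.cons x g : Fin (m+1) → ℕ) i = n) := by
            rw [Fin.sum_cons]
            omega
          rw [I_false hno, zero_mul]
      calc ∑' (x : ℕ), ∑' (g : Fin m → ℕ),
            I (∑ i, (Fin.cons x g : Fin (m+1) → ℕ) i = n) * w ν (Fin.cons x g)
          = ∑' x : ℕ, if x ≤ n then ν x * cp ν m (n - x) else 0 := tsum_congr key
        _ = ∑ k ∈ Finset.range (n+1), (if k ≤ n then ν k * cp ν m (n - k) else 0) := by
            refine tsum_eq_sum fun x hx => ?_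
            rw [if_neg (by simpa [Nat.lt_succ_iff] using hx)]
        _ = ∑ k ∈ Finset.range (n+1), ν k * cp ν m (n - k) := by
            refine Finset.sum_congr rfl fun k hk => ?_
            rw [if_pos (by simpa [Nat.lt_succ_iff] using hk)]

/-! ### rotations -/

def rot {n : ℕ} [NeZero n] (j : Fin n) (f : Fin n → ℕ) : Fin n → ℕ := fun i => f (i + j)

lemma w_rot {n : ℕ} [NeZero n] (j : Fin n) (f : Fin n → ℕ) : w ν (rot j f) = w ν f :=
  Equiv.prod_comp (Equiv.addRight j) (fun i => ν (f i))

lemma sum_rot {n : ℕ} [NeZero n] (j : Fin n) (f : Fin n → ℕ) :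
    ∑ i, rot j f i = ∑ i, f i :=
  Equiv.sum_comp (Equiv.addRight j) f

def rotEquiv (n : ℕ) [NeZero n] (j : Fin n) : (Fin n → ℕ) ≃ (Fin n → ℕ) :=
  Equiv.arrowCongr (Equiv.addRight j).symm (Equiv.refl ℕ)

lemma rotEquiv_apply {n : ℕ} [NeZero n] (j : Fin n) (f : Fin n → ℕ) :
    rotEquiv n j f = rot j f := by
  funext i
  rfl

section Cycle

variable {n : ℕ} [NeZero n]

def Fext (f : Fin n → ℕ) : ℕ → ℕ :=
  fun t => f ⟨t % n, Nat.mod_lt t (Nat.pos_of_ne_zero (NeZero.ne n))⟩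

def sInt (f : Fin n → ℕ) : ℕ → ℤ :=
  fun t => ((∑ i ∈ Finset.range t, Fext f i : ℕ) : ℤ) - (t : ℤ)

lemma sum_range_add' (g : ℕ → ℕ) (a : ℕ) : ∀ b, ∑ i ∈ Finset.range (a + b), g i
    = ∑ i ∈ Finset.range a, g i + ∑ i ∈ Finset.range b, g (a + i) := by
  intro b
  induction b with
  | zero => simp
  | succ b ih =>
      have hab : a + (b + 1) = (a + b) + 1 := by omega
      rw [hab, Finset.sum_range_succ, ih, Finset.sum_range_succ]
      omega

lemma Fext_add (f : Fin n → ℕ) (t : ℕ) : Fext f (t + n) = Fext f t := by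
  unfold Fext
  congr 1
  exact Fin.ext (by simp [Nat.add_mod_right])

lemma window (f : Fin n → ℕ) : ∀ t, ∑ i ∈ Finset.range n, Fext f (t + i)
    = ∑ i ∈ Finset.range n, Fext f i := by
  intro t
  induction t with
  | zero => simp
  | succ t ih =>
      have h1 : ∑ i ∈ Finset.range (n + 1), Fext f (t + i)
          = ∑ i ∈ Finset.range n, Fext f (t + i) + Fext f (t + n) :=
        Finset.sum_range_succ _ n
      have h2 : ∑ i ∈ Finset.range (n + 1), Fext f (t + i)
          = ∑ i ∈ Finset.range n, Fext f (t + 1 + i) + Fext f (t + 0) := by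
        rw [Finset.sum_range_succ']
        congr 1
        refine Finset.sum_congr rfl fun i _ => ?_
        congr 1
        omega
      have h3 : Fext f (t + n) = Fext f (t + 0) := by
        rw [Nat.add_zero]
        exact Fext_add f t
      rw [← ih]
      omega

lemma sum_range_n (f : Fin n → ℕ) : ∑ i ∈ Finset.range n, Fext f i = ∑ i, f i := by
  rw [← Fin.sum_univ_eq_sum_range (fun i => Fext f i) n]
  refine Finset.sum_congr rfl fun i _ => ?_
  unfold Fext
  congr 1
  exact Fin.ext (by simp [Nat.mod_eq_of_lt i.isLt])

lemma sInt_add_n (f : Fin n → ℕ) (hf : ∑ i, f i + 1 = n) (t : ℕ) :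
    sInt f (t + n) = sInt f t - 1 := by
  unfold sInt
  rw [sum_range_add' (Fext f), window, sum_range_n]
  omega

lemma S_rot (f : Fin n → ℕ) (j : Fin n) {t : ℕ} (ht : t ≤ n) :
    S (rot j f) t = ∑ i ∈ Finset.range t, Fext f ((j : ℕ) + i) := by
  have key : ∀ i : Fin n, rot j f i = Fext f ((j : ℕ) + (i : ℕ)) := by
    intro i
    unfold rot Fext
    congr 1
    refine Fin.ext ?_
    rw [Fin.add_def]
    simp [Nat.add_comm]
  unfold S
  calc ∑ i : Fin n, (if (i : ℕ) < t then rot j f i else 0)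
      = ∑ i : Fin n, (if (i : ℕ) < t then Fext f ((j : ℕ) + (i : ℕ)) else 0) := by
        refine Finset.sum_congr rfl fun i _ => ?_
        rw [key]
    _ = ∑ v ∈ Finset.range n, (if v < t then Fext f ((j : ℕ) + v) else 0) :=
        Fin.sum_univ_eq_sum_range (fun v => if v < t then Fext f ((j : ℕ) + v) else 0) n
    _ = ∑ v ∈ Finset.range t, Fext f ((j : ℕ) + v) := by
        rw [← Finset.sum_filter]
        congr 1
        ext v
        simp only [Finset.mem_filter, Finset.mem_range]
        omega

lemma fp_rot_iff (f : Fin n → ℕ) (hf : ∑ i, f i + 1 = n) (j : Fin n) :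
    FP (rot j f) ↔ ∀ t, t < n → sInt f (j : ℕ) ≤ sInt f ((j : ℕ) + t) := by
  have hS : S (rot j f) n + 1 = n := by
    rw [S_top, sum_rot]
    exact hf
  constructor
  · rintro ⟨h1, _⟩ t ht
    have h2 := h1 t ht
    have hS' : S (rot j f) t = ∑ i ∈ Finset.range t, Fext f ((j : ℕ) + i) :=
      S_rot f j (le_of_lt ht)
    unfold sInt
    rw [sum_range_add' (Fext f)]
    omega
  · intro h
    refine ⟨fun t ht => ?_, hS⟩
    have h2 := h t ht
    unfold sInt at h2
    rw [sum_range_add' (Fext f)] at h2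
    have hS' : S (rot j f) t = ∑ i ∈ Finset.range t, Fext f ((j : ℕ) + i) :=
      S_rot f j (le_of_lt ht)
    omega

omit [NeZero n] in
lemma cycle_core (s : ℕ → ℤ) (hn : 0 < n) (hper : ∀ t, s (t + n) = s t - 1) :
    ∃! j : ℕ, j < n ∧ ∀ t, t < n → s j ≤ s (j + t) := by
  obtain ⟨j₀, hj₀mem, hj₀min⟩ := Finset.exists_min_image (Finset.range n) s
    ⟨0, Finset.mem_range.mpr hn⟩
  set B := (Finset.range n).filter (fun v => s v = s j₀) with hB
  have hBne : B.Nonempty := ⟨j₀, by simp [hB, Finset.mem_range.mp hj₀mem]⟩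
  set j := B.min' hBne with hj
  have hjB : j ∈ B := Finset.min'_mem B hBne
  have hjr : j < n := by
    have := (Finset.mem_filter.mp hjB).1
    simpa using this
  have hjval : s j = s j₀ := (Finset.mem_filter.mp hjB).2
  have hmin : ∀ v, v < n → s j ≤ s v := by
    intro v hv
    rw [hjval]
    exact hj₀min v (Finset.mem_range.mpr hv)
  have hstrict : ∀ v, v < j → s j + 1 ≤ s v := by
    intro v hv
    have hvn : v < n := lt_trans hv hjr
    have h1 : s j ≤ s v := hmin v hvn
    rcases lt_or_eq_of_le h1 with h | h
    · omega
    · exfalso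
      have hvB : v ∈ B := Finset.mem_filter.mpr ⟨Finset.mem_range.mpr hvn, by omega⟩
      have := Finset.min'_le B v hvB
      omega
  have hgood : ∀ t, t < n → s j ≤ s (j + t) := by
    intro t ht
    by_cases hcase : j + t < n
    · exact hmin _ hcase
    · have hv : j + t - n < j := by omega
      have heq : s (j + t) = s (j + t - n) - 1 := by
        have harr : (j + t - n) + n = j + t := by omega
        calc s (j + t) = s ((j + t - n) + n) := by rw [harr]
          _ = s (j + t - n) - 1 := hper _
      have := hstrict (j + t - n) hv
      omega
  have key : ∀ a b, a < n → b < n → a < b → (∀ t, t < n → s a ≤ s (a + t)) →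
      (∀ t, t < n → s b ≤ s (b + t)) → False := by
    intro a b han hbn hab hga hgb
    have h1 : s a ≤ s b := by
      have h := hga (b - a) (by omega)
      have hba : a + (b - a) = b := by omega
      rwa [hba] at h
    have h2 : s b ≤ s (a + n) := by
      have h := hgb (a + n - b) (by omega)
      have hba : b + (a + n - b) = a + n := by omega
      rwa [hba] at h
    have h3 : s (a + n) = s a - 1 := hper a
    omega
  refine ⟨j, ⟨hjr, hgood⟩, ?_⟩
  rintro j' ⟨hj'n, hgood'⟩
  rcases lt_trichotomy j' j with h | h | h
  · exact (key j' j hj'n hjr h hgood' hgood).elim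
  · exact h
  · exact (key j j' hjr hj'n h hgood hgood').elim

lemma cycle_fin (f : Fin n → ℕ) (hf : ∑ i, f i + 1 = n) :
    ∃! j : Fin n, FP (rot j f) := by
  have hn : 0 < n := Nat.pos_of_ne_zero (NeZero.ne n)
  obtain ⟨j₀, ⟨hj₀n, hgood⟩, huniq⟩ := cycle_core (s := sInt f) hn (sInt_add_n f hf)
  refine ⟨⟨j₀, hj₀n⟩, ?_, ?_⟩
  · show FP (rot (⟨j₀, hj₀n⟩ : Fin n) f)
    rw [fp_rot_iff f hf]
    exact fun t ht => hgood t ht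
  · intro j' hj'
    have hj'' : FP (rot j' f) := hj'
    rw [fp_rot_iff f hf] at hj''
    exact Fin.ext (huniq (j' : ℕ) ⟨j'.isLt, hj''⟩)

end Cycle

/-- Kemperman / cycle lemma: `μ^{*(m+1)}(m) = (m+1) p_{m+1}` -/
lemma b_eq (m : ℕ) :
    ∑' f : Fin (m+1) → ℕ, I (∑ i, f i = m) * w ν f
      = ((m + 1 : ℕ) : ℝ≥0∞) * p ν (m+1) := by
  have hpt : ∀ f : Fin (m+1) → ℕ,
      I (∑ i, f i = m) * w ν f = ∑ j : Fin (m+1), I (FP (rot j f)) * w ν f := by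
    intro f
    by_cases hf : ∑ i, f i = m
    · rw [I_true hf, one_mul]
      have hf' : ∑ i, f i + 1 = m + 1 := by omega
      obtain ⟨j₀, hj₀, huniq⟩ := cycle_fin f hf'
      calc w ν f = ∑ j : Fin (m+1), (if j = j₀ then w ν f else 0) := by
            rw [Finset.sum_ite_eq' Finset.univ j₀ (fun _ => w ν f)]
            simp
        _ = ∑ j : Fin (m+1), I (FP (rot j f)) * w ν f := by
            refine Finset.sum_congr rfl fun j _ => ?_
            by_cases hj : j = j₀
            · subst hj
              rw [if_pos rfl, I_true hj₀, one_mul]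
            · rw [if_neg hj, I_false (fun hFP => hj (huniq j hFP)), zero_mul]
    · rw [I_false hf, zero_mul]
      symm
      refine Finset.sum_eq_zero fun j _ => ?_
      have hno : ¬ FP (rot j f) := by
        intro hFP
        have h2 := hFP.2
        rw [S_top, sum_rot] at h2
        omega
      rw [I_false hno, zero_mul]
  calc ∑' f : Fin (m+1) → ℕ, I (∑ i, f i = m) * w ν f
      = ∑' f : Fin (m+1) → ℕ, ∑ j : Fin (m+1), I (FP (rot j f)) * w ν f := tsum_congr hpt
    _ = ∑ j : Fin (m+1), ∑' f : Fin (m+1) → ℕ, I (FP (rot j f)) * w ν f :=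
        Summable.tsum_finsetSum fun j _ => ENNReal.summable
    _ = ∑ j : Fin (m+1), p ν (m+1) := by
        refine Finset.sum_congr rfl fun j _ => ?_
        calc ∑' f : Fin (m+1) → ℕ, I (FP (rot j f)) * w ν f
            = ∑' f : Fin (m+1) → ℕ,
                I (FP (rotEquiv (m+1) j f)) * w ν (rotEquiv (m+1) j f) := by
              refine tsum_congr fun f => ?_
              rw [rotEquiv_apply, w_rot]
          _ = ∑' g : Fin (m+1) → ℕ, I (FP g) * w ν g :=
              (rotEquiv (m+1) j).tsum_eq (fun g => I (FP g) * w ν g)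
          _ = p ν (m+1) := rfl
    _ = ((m + 1 : ℕ) : ℝ≥0∞) * p ν (m+1) := by
        rw [Finset.sum_const, Finset.card_univ, Fintype.card_fin, nsmul_eq_mul]

lemma q_tail (h1 : ∑' k, ν k = 1) (hq0 : Filter.Tendsto (q ν) Filter.atTop (𝓝 0)) (j : ℕ) :
    q ν j = ∑' k : ℕ, p ν (j + k + 1) := by
  have hpart : ∀ N, q ν j = (∑ k ∈ Finset.range N, p ν (j + k + 1)) + q ν (j + N) := by
    intro N
    induction N with
    | zero => simp
    | succ N ih =>
        rw [ih, Finset.sum_range_succ, q_succ ν h1 (j + N),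
          show j + (N + 1) = (j + N) + 1 from rfl]
        ring
  refine le_antisymm ?_ ?_
  · have hcomp : Filter.Tendsto (fun N => q ν (j + N)) Filter.atTop (𝓝 0) := by
      refine Filter.Tendsto.congr (f₁ := fun N => q ν (N + j)) (fun N => by rw [Nat.add_comm]) ?_
      exact hq0.comp (Filter.tendsto_add_atTop_nat j)
    have htend : Filter.Tendsto (fun N => (∑' k : ℕ, p ν (j + k + 1)) + q ν (j + N))
        Filter.atTop (𝓝 ((∑' k : ℕ, p ν (j + k + 1)) + 0)) :=
      Filter.Tendsto.const_add _ hcomp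
    have hle : q ν j ≤ (∑' k : ℕ, p ν (j + k + 1)) + 0 := by
      refine ge_of_tendsto' htend fun N => ?_
      rw [hpart N]
      exact add_le_add_left (ENNReal.sum_le_tsum _) _
    rwa [add_zero] at hle
  · rw [ENNReal.tsum_eq_iSup_nat]
    refine iSup_le fun N => ?_
    rw [hpart N]
    exact le_self_add

theorem main_enn (h1 : ∑' k, ν k = 1) (c : ℝ≥0∞)
    (hc : ∑' k : ℕ, (k : ℝ≥0∞) * ν k = c) (hc1 : c < 1) :
    ∑' m : ℕ, cp ν (m + 1) m = (1 - c)⁻¹ := by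
  set d : ℝ≥0∞ := 1 - c with hd
  have hcd : c + d = 1 := add_tsub_cancel_of_le (le_of_lt hc1)
  have hd0 : d ≠ 0 := by
    rw [hd]
    intro h
    rw [tsub_eq_zero_iff_le] at h
    exact absurd h (not_le.mpr hc1)
  have hdtop : d ≠ ⊤ := ne_top_of_le_ne_top ENNReal.one_ne_top tsub_le_self
  have hctop : c ≠ ⊤ := ne_top_of_lt hc1
  have tel := telescope ν h1 c d hcd hc
  set Q : ℝ≥0∞ := ∑' j, q ν j with hQ
  have hdQ_le : d * Q ≤ 1 := by
    rw [hQ, ENNReal.tsum_eq_iSup_nat, ENNReal.mul_iSup]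
    refine iSup_le fun J => ?_
    calc d * ∑ j ∈ Finset.range J, q ν j
        ≤ (e ν J + q ν J) + d * ∑ j ∈ Finset.range J, q ν j := le_add_self
      _ = 1 := tel J
  have hQtop : Q ≠ ⊤ := by
    intro h
    rw [h, ENNReal.mul_top hd0] at hdQ_le
    simp at hdQ_le
  have hq0 : Filter.Tendsto (q ν) Filter.atTop (𝓝 0) :=
    ENNReal.tendsto_atTop_zero_of_tsum_ne_top hQtop
  have hdQ_ge : (1 : ℝ≥0∞) ≤ d * Q := by
    refine ENNReal.le_of_forall_pos_le_add fun ε hε _ => ?_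
    set ε3 : ℝ≥0∞ := (ε : ℝ≥0∞) / 3 with hε3
    have hε3pos : 0 < ε3 := ENNReal.div_pos (by exact_mod_cast hε.ne') (by norm_num)
    have htail : Filter.Tendsto (fun K => ∑' k : ℕ, q ν (k + K)) Filter.atTop (𝓝 0) :=
      ENNReal.tendsto_sum_nat_add (q ν) hQtop
    obtain ⟨K, hK⟩ := (htail.eventually_lt_const hε3pos).exists
    obtain ⟨M, hM⟩ := AKM_small ν h1 c hc hctop K hε3pos
    have hqM : Filter.Tendsto (fun J => ((M : ℝ≥0∞) + 1) * q ν J) Filter.atTop (𝓝 0) := by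
      have h := ENNReal.Tendsto.const_mul (a := (M : ℝ≥0∞) + 1) hq0
        (Or.inr (by simp))
      simpa using h
    obtain ⟨J', hJ'⟩ := ((hqM.eventually_lt_const hε3pos).and
      (Filter.eventually_ge_atTop K)).exists
    obtain ⟨hJq, hJK⟩ := hJ'
    have he := e_bound ν h1 c hc hJK M
    have htail_eq : ∑' j : ℕ, q ν (K + j) = ∑' k : ℕ, q ν (k + K) :=
      tsum_congr fun j => by rw [Nat.add_comm]
    have hcq : c * ∑' j : ℕ, q ν (K + j) ≤ ε3 := by
      rw [htail_eq]
      calc c * ∑' k : ℕ, q ν (k + K) ≤ 1 * ∑' k : ℕ, q ν (k + K) :=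
            mul_le_mul' (le_of_lt hc1) le_rfl
        _ = ∑' k : ℕ, q ν (k + K) := one_mul _
        _ ≤ ε3 := le_of_lt hK
    have hMq : (M : ℝ≥0∞) * q ν J' + q ν J' ≤ ε3 := by
      calc (M : ℝ≥0∞) * q ν J' + q ν J' = ((M : ℝ≥0∞) + 1) * q ν J' := by ring
        _ ≤ ε3 := le_of_lt hJq
    have hsum3 : ε3 + ε3 + ε3 = (ε : ℝ≥0∞) := by
      rw [hε3, show (ε : ℝ≥0∞) / 3 + (ε : ℝ≥0∞) / 3 + (ε : ℝ≥0∞) / 3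
        = 3 * ((ε : ℝ≥0∞) / 3) by ring]
      exact ENNReal.mul_div_cancel' (by norm_num) (by norm_num)
    calc (1 : ℝ≥0∞) = (e ν J' + q ν J') + d * ∑ j ∈ Finset.range J', q ν j := (tel J').symm
      _ ≤ (e ν J' + q ν J') + d * Q := by
          refine add_le_add le_rfl (mul_le_mul' le_rfl ?_)
          rw [hQ]
          exact ENNReal.sum_le_tsum _
      _ ≤ ((AKM ν K M + (M : ℝ≥0∞) * q ν J' + c * ∑' j : ℕ, q ν (K + j)) + q ν J') + d * Q :=
          add_le_add (add_le_add he le_rfl) le_rfl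
      _ ≤ ((ε3 + (M : ℝ≥0∞) * q ν J' + ε3) + q ν J') + d * Q := by
          refine add_le_add (add_le_add ?_ le_rfl) le_rfl
          exact add_le_add (add_le_add hM le_rfl) hcq
      _ = (ε3 + ε3 + ((M : ℝ≥0∞) * q ν J' + q ν J')) + d * Q := by ring
      _ ≤ (ε3 + ε3 + ε3) + d * Q := add_le_add (add_le_add le_rfl hMq) le_rfl
      _ = d * Q + ε := by rw [hsum3]; ring
  have hdQ : d * Q = 1 := le_antisymm hdQ_le hdQ_ge
  have hQval : Q = 1 / d := (ENNReal.eq_div_iff hd0 hdtop).mpr hdQ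
  have hsum : ∑' m : ℕ, cp ν (m + 1) m = Q := by
    calc ∑' m : ℕ, cp ν (m + 1) m
        = ∑' m : ℕ, ((m + 1 : ℕ) : ℝ≥0∞) * p ν (m + 1) := by
          refine tsum_congr fun m => ?_
          rw [cp_eq ν (m + 1) m, b_eq]
      _ = ∑' (m : ℕ) (j : ℕ), I (j ≤ m) * p ν (m + 1) := by
          refine tsum_congr fun m => ?_
          rw [tsum_eq_sum (s := Finset.range (m + 1))
            (fun j hj => by rw [I_false (by simpa [Nat.lt_succ_iff] using hj), zero_mul])]
          rw [Finset.sum_congr rfl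
            (fun j hj => by rw [I_true (Nat.lt_succ_iff.mp (Finset.mem_range.mp hj)), one_mul])]
          rw [Finset.sum_const, Finset.card_range, nsmul_eq_mul]
      _ = ∑' (j : ℕ) (m : ℕ), I (j ≤ m) * p ν (m + 1) := ENNReal.tsum_comm
      _ = ∑' j : ℕ, q ν j := by
          refine tsum_congr fun j => ?_
          rw [q_tail ν h1 hq0 j]
          have hinj : Function.Injective (fun k : ℕ => j + k) := fun a b hab => by
            simpa using hab
          have hsupp : Function.support (fun m => I (j ≤ m) * p ν (m + 1))
              ⊆ Set.range (fun k : ℕ => j + k) := by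
            intro m hm
            rcases le_or_gt j m with h | h
            · exact ⟨m - j, show j + (m - j) = m by omega⟩
            · exact (hm (show I (j ≤ m) * p ν (m + 1) = 0 by
                rw [I_false (by omega), zero_mul])).elim
          calc ∑' m : ℕ, I (j ≤ m) * p ν (m + 1)
              = ∑' k : ℕ, (fun m => I (j ≤ m) * p ν (m + 1)) ((fun k : ℕ => j + k) k) :=
                (Function.Injective.tsum_eq hinj hsupp).symm
            _ = ∑' k : ℕ, p ν (j + k + 1) := by
                refine tsum_congr fun k => ?_
                show I (j ≤ j + k) * p ν (j + k + 1) = _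
                rw [I_true (by omega), one_mul]
      _ = Q := rfl
  rw [hsum, hQval, one_div]

lemma cp_ofReal (μ : ℕ → ℝ) (hnn : ∀ a, 0 ≤ μ a) :
    ∀ m n : ℕ, 0 ≤ convPow μ m n ∧
      cp (fun k => ENNReal.ofReal (μ k)) m n = ENNReal.ofReal (convPow μ m n) := by
  intro m
  induction m with
  | zero =>
      intro n
      constructor
      · show (0 : ℝ) ≤ if n = 0 then 1 else 0
        split <;> norm_num
      · show (if n = 0 then 1 else 0 : ℝ≥0∞) = ENNReal.ofReal (if n = 0 then 1 else 0)
        split <;> simp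
  | succ m ih =>
      intro n
      constructor
      · show (0 : ℝ) ≤ conv μ (convPow μ m) n
        exact Finset.sum_nonneg fun k _ => mul_nonneg (hnn k) (ih (n - k)).1
      · show convE _ (cp _ m) n = ENNReal.ofReal (conv μ (convPow μ m) n)
        unfold convE conv
        rw [ENNReal.ofReal_sum_of_nonneg (fun k _ => mul_nonneg (hnn k) (ih (n - k)).1)]
        refine Finset.sum_congr rfl fun k _ => ?_
        rw [ENNReal.ofReal_mul (hnn k), (ih (n - k)).2]

end
end GW

theorem stmt_10 (D : ℝ) (hD : 0 < D)
    (μ : ℕ → ℝ) (hnn : ∀ a, 0 ≤ μ a) (hprob : ∑' a : ℕ, μ a = 1)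
    (hsummean : Summable fun a : ℕ => (a : ℝ) * μ a)
    (hmean : ∑' a : ℕ, (a : ℝ) * μ a = 1 - D) :
    ∑' m : ℕ, convPow μ (m + 1) m = 1 / D := by
  classical
  have hsum : Summable μ := by
    by_contra h
    rw [tsum_eq_zero_of_not_summable h] at hprob
    norm_num at hprob
  have h1 : ∑' k : ℕ, ENNReal.ofReal (μ k) = 1 := by
    rw [← ENNReal.ofReal_tsum_of_nonneg hnn hsum, hprob, ENNReal.ofReal_one]
  have hmean_nn : (0 : ℝ) ≤ 1 - D := by
    rw [← hmean]
    exact tsum_nonneg fun a => mul_nonneg (Nat.cast_nonneg a) (hnn a)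
  have hc : ∑' k : ℕ, (k : ℝ≥0∞) * ENNReal.ofReal (μ k) = ENNReal.ofReal (1 - D) := by
    have hterm : ∀ k : ℕ, (k : ℝ≥0∞) * ENNReal.ofReal (μ k)
        = ENNReal.ofReal ((k : ℝ) * μ k) := by
      intro k
      rw [ENNReal.ofReal_mul (Nat.cast_nonneg k)]
      congr 1
      exact (ENNReal.ofReal_natCast k).symm
    rw [tsum_congr hterm, ← ENNReal.ofReal_tsum_of_nonneg
      (fun k => mul_nonneg (Nat.cast_nonneg k) (hnn k)) hsummean, hmean]
  have hc1 : ENNReal.ofReal (1 - D) < 1 := by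
    rw [← ENNReal.ofReal_one]
    exact (ENNReal.ofReal_lt_ofReal_iff (by norm_num)).mpr (by linarith)
  have main := GW.main_enn (fun k => ENNReal.ofReal (μ k)) h1 (ENNReal.ofReal (1 - D)) hc hc1
  have hd : (1 : ℝ≥0∞) - ENNReal.ofReal (1 - D) = ENNReal.ofReal D := by
    rw [← ENNReal.ofReal_one, ← ENNReal.ofReal_sub 1 hmean_nn]
    congr 1
    ring
  rw [hd] at main
  have hcp := GW.cp_ofReal μ hnn
  have hne : ∀ m : ℕ, GW.cp (fun k => ENNReal.ofReal (μ k)) (m + 1) m ≠ ⊤ := fun m => by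
    rw [(hcp (m + 1) m).2]
    exact ENNReal.ofReal_ne_top
  calc ∑' m : ℕ, convPow μ (m + 1) m
      = ∑' m : ℕ, (GW.cp (fun k => ENNReal.ofReal (μ k)) (m + 1) m).toReal := by
        refine tsum_congr fun m => ?_
        rw [(hcp (m + 1) m).2, ENNReal.toReal_ofReal (hcp (m + 1) m).1]
    _ = (∑' m : ℕ, GW.cp (fun k => ENNReal.ofReal (μ k)) (m + 1) m).toReal :=
        (ENNReal.tsum_toReal_eq hne).symm
    _ = ((ENNReal.ofReal D)⁻¹).toReal := by rw [main]
    _ = 1 / D := by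
        rw [← ENNReal.ofReal_inv_of_pos hD, ENNReal.toReal_ofReal (by positivity), one_div]
end

section
/- In the symmetric model with ν(0) > 0, for every m ≥ 2 and t < T, the concentration of particles with no arms is c_t(0,m) = (1/(m(m-1)))·(1+1/t)^{1-m}·ν^{*m}(m-2), obtained by integrating dc_t(0,m)/dt = (1/2)Σ_{m'=1}^{m-1} c_t(1,m')c_t(1,m-m') with c_0(0,m)=0, where c_t(1,m) = t^{m-1}(1+t)^{-m} m^{-1}ν^{*m}(m-1). -/
open Finset PowerSeries

lemma convPow_deriv (f : ℕ → ℝ) (m n : ℕ) :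
    (n : ℝ) * convPow f (m + 1) n
      = ((m : ℝ) + 1) * ∑ k ∈ Finset.range (n + 1), (k : ℝ) * f k * convPow f m (n - k) := by
  cases n with
  | zero => simp
  | succ n =>
    have hD : PowerSeries.derivative ℝ ((PowerSeries.mk f) ^ (m + 1))
        = (m + 1) • ((PowerSeries.derivative ℝ (PowerSeries.mk f)) * (PowerSeries.mk f) ^ m) := by
      rw [Derivation.leibniz_pow]
      simp only [Nat.add_sub_cancel, smul_eq_mul]
      ring_nf
    have h1 : ((n : ℝ) + 1) * convPow f (m + 1) (n + 1)
        = PowerSeries.coeff n (PowerSeries.derivative ℝ ((PowerSeries.mk f) ^ (m + 1))) := by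
      rw [PowerSeries.coeff_derivative, convPow_coeff]
      ring
    rw [show ((n + 1 : ℕ) : ℝ) = (n : ℝ) + 1 by push_cast; ring, h1, hD, map_nsmul]
    rw [PowerSeries.coeff_mul, Finset.Nat.sum_antidiagonal_eq_sum_range_succ_mk]
    conv_rhs => rw [Finset.sum_range_succ']
    simp only [PowerSeries.coeff_derivative, PowerSeries.coeff_mk, Nat.cast_zero, zero_mul,
      mul_zero, add_zero, nsmul_eq_mul, Nat.cast_add, Nat.cast_one]
    rw [Finset.mul_sum, Finset.mul_sum]
    refine Finset.sum_congr rfl fun k hk => ?_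
    have : n + 1 - (k + 1) = n - k := by omega
    rw [this, convPow_coeff]
    ring

/-- First-passage weights: `F f p m` is the weight of first passage to level `-p` in `m` steps. -/
def FP (f : ℕ → ℝ) : ℕ → ℕ → ℝ
  | p, 0 => if p = 0 then 1 else 0
  | 0, _ + 1 => 0
  | p + 1, m + 1 => ∑ k ∈ Finset.range (m + 2), f k * FP f (p + k) m

lemma FP_vanish (f : ℕ → ℝ) : ∀ n p : ℕ, n < p → FP f p n = 0 := by
  intro n
  induction n with
  | zero => intro p hp; match p, hp with
    | p + 1, _ => simp [FP]
  | succ n ih =>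
    intro p hp
    match p, hp with
    | p + 1, hp =>
      rw [FP]
      refine Finset.sum_eq_zero fun k _ => ?_
      rw [ih (p + k) (by omega), mul_zero]

lemma FP_ext (f : ℕ → ℝ) (p m N : ℕ) (hN : m + 2 ≤ N) :
    FP f (p + 1) (m + 1) = ∑ k ∈ Finset.range N, f k * FP f (p + k) m := by
  rw [FP]
  refine Finset.sum_subset (Finset.range_subset_range.2 hN) fun k hk hk' => ?_
  simp only [Finset.mem_range, not_lt] at hk'
  rw [FP_vanish f m (p + k) (by omega), mul_zero]

lemma FP_eq (f : ℕ → ℝ) : ∀ m : ℕ, 1 ≤ m → ∀ p : ℕ, p ≤ m →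
    FP f p m = (p : ℝ) / m * convPow f m (m - p) := by
  intro m hm
  induction m, hm using Nat.le_induction with
  | base =>
    intro p hp
    interval_cases p
    · simp [FP]
    · simp [FP, convPow, conv, Finset.sum_range_succ]
  | succ m hm ih =>
    intro p hp
    match p with
    | 0 => simp [FP]
    | p + 1 =>
      set n := m - p with hn
      have hpm : p ≤ m := by omega
      have h1 : FP f (p + 1) (m + 1) = ∑ k ∈ Finset.range (n + 1), f k * FP f (p + k) m := by
        rw [FP]
        refine (Finset.sum_subset (Finset.range_subset_range.2 (by omega)) fun k hk hk' => ?_).symm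
        simp only [Finset.mem_range, not_lt] at hk'
        rw [FP_vanish f m (p + k) (by omega), mul_zero]
      have h2 : ∀ k ∈ Finset.range (n + 1),
          f k * FP f (p + k) m
            = (1 / (m : ℝ)) * ((p : ℝ) * (f k * convPow f m (n - k))
                + ((k : ℝ) * f k * convPow f m (n - k))) := by
        intro k hk
        simp only [Finset.mem_range] at hk
        rw [ih (p + k) (by omega), show m - (p + k) = n - k by omega]
        push_cast
        have hm0 : (m : ℝ) ≠ 0 := by positivity
        field_simp
      rw [h1, Finset.sum_congr rfl h2, show m + 1 - (p + 1) = n by omega]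
      have hS0 : ∑ k ∈ Finset.range (n + 1), f k * convPow f m (n - k)
          = convPow f (m + 1) n := rfl
      have hm0 : (m : ℝ) ≠ 0 := by positivity
      have hm1 : (m : ℝ) + 1 ≠ 0 := by positivity
      have hS1 : ∑ k ∈ Finset.range (n + 1), (k : ℝ) * f k * convPow f m (n - k)
          = (n : ℝ) * convPow f (m + 1) n / ((m : ℝ) + 1) := by
        rw [eq_div_iff hm1]
        linarith [convPow_deriv f m n]
      rw [← Finset.mul_sum, Finset.sum_add_distrib, ← Finset.mul_sum, hS0, hS1]
      have hcn : (n : ℝ) = (m : ℝ) - (p : ℝ) := by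
        rw [hn, Nat.cast_sub hpm]
      rw [hcn]
      push_cast
      field_simp
      ring

lemma FP_conv (f : ℕ → ℝ) (q : ℕ) : ∀ m p : ℕ,
    ∑ j ∈ Finset.range (m + 1), FP f p j * FP f q (m - j) = FP f (p + q) m := by
  intro m
  induction m with
  | zero =>
    intro p
    simp only [Finset.sum_range_one, Nat.zero_sub]
    match p, q with
    | 0, 0 => simp [FP]
    | 0, q + 1 => simp [FP]
    | p + 1, q => simp [FP]
  | succ m ih =>
    intro p
    match p with
    | 0 =>
      rw [Finset.sum_eq_single 0]
      · simp [FP]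
      · intro j hj hj0
        match j, hj0 with
        | j + 1, _ => simp [FP]
      · intro h; simp at h
    | p + 1 =>
      rw [Finset.sum_range_succ']
      have hz : FP f (p + 1) 0 * FP f q (m + 1 - 0) = 0 := by simp [FP]
      rw [hz, add_zero]
      have h1 : ∀ i ∈ Finset.range (m + 1),
          FP f (p + 1) (i + 1) * FP f q (m + 1 - (i + 1))
            = ∑ k ∈ Finset.range (m + 2), f k * (FP f (p + k) i * FP f q (m - i)) := by
        intro i hi
        simp only [Finset.mem_range] at hi
        rw [Nat.succ_sub_succ, FP_ext f p i (m + 2) (by omega), Finset.sum_mul]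
        exact Finset.sum_congr rfl fun k _ => by ring
      rw [Finset.sum_congr rfl h1, Finset.sum_comm]
      have h2 : ∀ k ∈ Finset.range (m + 2),
          ∑ i ∈ Finset.range (m + 1), f k * (FP f (p + k) i * FP f q (m - i))
            = f k * FP f (p + q + k) m := by
        intro k _
        rw [← Finset.mul_sum, ih (p + k), show p + k + q = p + q + k by omega]
      rw [Finset.sum_congr rfl h2, show p + 1 + q = (p + q) + 1 by omega, FP]

lemma key_identity (f : ℕ → ℝ) (m : ℕ) (hm : 2 ≤ m) :
    ∑ j ∈ Finset.Ico 1 m, FP f 1 j * FP f 1 (m - j)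
      = 2 / (m : ℝ) * convPow f m (m - 2) := by
  have h2 : FP f 2 m = 2 / (m : ℝ) * convPow f m (m - 2) := by
    rw [FP_eq f m (by omega) 2 hm]; norm_num
  rw [← h2, ← FP_conv f 1 m 1]
  rw [Finset.sum_range_succ, show m - m = 0 by omega, show FP f 1 0 = 0 from rfl,
    mul_zero, add_zero, Finset.range_eq_Ico,
    Finset.sum_eq_sum_Ico_succ_bot (by omega : 0 < m)]
  rw [show FP f 1 0 = 0 from rfl, zero_mul, zero_add]

lemma integral_aux (k : ℕ) (t : ℝ) (ht : 0 < t) :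
    ∫ s in (0:ℝ)..t, s ^ k * (((1 + s) ^ (k + 2))⁻¹)
      = ((k : ℝ) + 1)⁻¹ * t ^ (k + 1) * ((1 + t) ^ (k + 1))⁻¹ := by
  have huIcc : Set.uIcc (0:ℝ) t = Set.Icc 0 t := Set.uIcc_of_le ht.le
  have hderiv : ∀ s ∈ Set.uIcc (0:ℝ) t,
      HasDerivAt (fun x : ℝ => ((k : ℝ) + 1)⁻¹ * (x ^ (k + 1) * (((1 + x) ^ (k + 1))⁻¹)))
        (s ^ k * (((1 + s) ^ (k + 2))⁻¹)) s := by
    intro s hs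
    rw [huIcc, Set.mem_Icc] at hs
    have hs1 : (0:ℝ) < 1 + s := by linarith [hs.1]
    have hs1' : (1 + s : ℝ) ≠ 0 := ne_of_gt hs1
    have h1 : HasDerivAt (fun x : ℝ => x ^ (k + 1)) (((k:ℝ) + 1) * s ^ k) s := by
      simpa using hasDerivAt_pow (k + 1) s
    have h2 : HasDerivAt (fun x : ℝ => (1 + x) ^ (k + 1))
        (((k:ℝ) + 1) * (1 + s) ^ k) s := by
      have := ((hasDerivAt_id s).const_add 1).fun_pow (k + 1)
      simpa using this
    have h3 : HasDerivAt (fun x : ℝ => (((1 + x) ^ (k + 1))⁻¹))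
        (-(((k:ℝ) + 1) * (1 + s) ^ k) / ((1 + s) ^ (k + 1)) ^ 2) s :=
      h2.inv (pow_ne_zero _ hs1')
    have h4 := (h1.fun_mul h3).const_mul (((k : ℝ) + 1)⁻¹)
    refine h4.congr_deriv ?_
    have hk1 : ((k:ℝ) + 1) ≠ 0 := by positivity
    field_simp
    ring
  have hint : IntervalIntegrable (fun s : ℝ => s ^ k * (((1 + s) ^ (k + 2))⁻¹))
      MeasureTheory.volume 0 t := by
    apply ContinuousOn.intervalIntegrable
    apply ContinuousOn.mul (continuousOn_pow k)
    apply ContinuousOn.inv₀ (Continuous.continuousOn (by continuity))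
    intro s hs
    rw [huIcc, Set.mem_Icc] at hs
    have : (0:ℝ) < 1 + s := by linarith [hs.1]
    positivity
  rw [intervalIntegral.integral_eq_sub_of_hasDerivAt hderiv hint]
  simp [mul_assoc]

theorem stmt_16 (ν : ℕ → ℝ) (hnn : ∀ a, 0 ≤ ν a) (hprob : ∑' a : ℕ, ν a = 1)
    (hν0 : 0 < ν 0)
    (M : ℝ) (hsummean : Summable fun a : ℕ => (a : ℝ) * ν a)
    (hM : M = ∑' a : ℕ, (a : ℝ) * ν a)
    (c1 : ℝ → ℕ → ℝ)
    (hc1 : ∀ t : ℝ, ∀ m : ℕ, 1 ≤ m →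
      c1 t m = t ^ (m - 1) * ((1 + t) ^ m)⁻¹ * (m : ℝ)⁻¹ * convPow ν m (m - 1)) :
    ∀ m : ℕ, 2 ≤ m → ∀ t : ℝ, 0 < t → (1 < M → t < 1 / (M - 1)) →
      (1 / ((m : ℝ) * ((m : ℝ) - 1))) * ((1 + 1 / t) ^ (m - 1))⁻¹ *
          convPow ν m (m - 2) =
        ∫ s in (0 : ℝ)..t,
          (1 / 2) * ∑ m' ∈ Finset.Ico 1 m, c1 s m' * c1 s (m - m') := by
  intro m hm t ht _
  obtain ⟨k, rfl⟩ : ∃ k, m = k + 2 := ⟨m - 2, by omega⟩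
  have hpt : ∀ s : ℝ, (1/2 : ℝ) * ∑ m' ∈ Finset.Ico 1 (k+2), c1 s m' * c1 s (k + 2 - m')
      = ((k : ℝ) + 2)⁻¹ * convPow ν (k+2) k * (s ^ k * ((1 + s) ^ (k+2))⁻¹) := by
    intro s
    have hterm : ∀ j ∈ Finset.Ico 1 (k+2), c1 s j * c1 s (k + 2 - j)
        = s ^ k * ((1 + s) ^ (k+2))⁻¹ * (FP ν 1 j * FP ν 1 (k + 2 - j)) := by
      intro j hj
      simp only [Finset.mem_Ico] at hj
      set i := k + 2 - j with hidef
      have hj1 : 1 ≤ j := hj.1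
      have hi1 : 1 ≤ i := by omega
      have hcj : c1 s j = s ^ (j - 1) * ((1 + s) ^ j)⁻¹ * FP ν 1 j := by
        rw [hc1 s j hj1, FP_eq ν j hj1 1 hj1]
        push_cast
        ring
      have hci : c1 s i = s ^ (i - 1) * ((1 + s) ^ i)⁻¹ * FP ν 1 i := by
        rw [hc1 s i hi1, FP_eq ν i hi1 1 hi1]
        push_cast
        ring
      have e1 : s ^ (j - 1) * s ^ (i - 1) = s ^ k := by
        rw [← pow_add]; congr 1; omega
      have e2 : ((1 + s) ^ j)⁻¹ * ((1 + s) ^ i)⁻¹ = ((1 + s) ^ (k+2))⁻¹ := by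
        rw [← mul_inv, ← pow_add]; congr 2; omega
      calc c1 s j * c1 s i
          = (s ^ (j-1) * s ^ (i-1)) * (((1 + s) ^ j)⁻¹ * ((1 + s) ^ i)⁻¹)
              * (FP ν 1 j * FP ν 1 i) := by rw [hcj, hci]; ring
        _ = s ^ k * ((1 + s) ^ (k+2))⁻¹ * (FP ν 1 j * FP ν 1 i) := by rw [e1, e2]
    rw [Finset.sum_congr rfl hterm, ← Finset.mul_sum,
      key_identity ν (k+2) (by omega), show k + 2 - 2 = k from rfl]
    push_cast
    ring
  rw [intervalIntegral.integral_congr (fun s _ => hpt s),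
    intervalIntegral.integral_const_mul, integral_aux k t ht,
    show k + 2 - 1 = k + 1 from rfl, show k + 2 - 2 = k from rfl]
  have htne : t ≠ 0 := ne_of_gt ht
  have h1t : (1 + 1/t) = (1 + t)/t := by
    rw [add_div, div_self htne, add_comm]
  rw [h1t, div_pow, inv_div]
  push_cast
  rw [one_div, mul_inv]
  ring
end
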